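/- arXiv:1304.7886 — 9 statements merged into one kernel-verified Lean document; each statement's English description precedes it below -/
import Mathlib

section
/- The sum-throughput R_sum(τ) = Σ_{i=1}^K R_i(τ) is concave on the nonnegative orthant {τ ∈ ℝ^{K+1} : τ_j ≥ 0 for all j = 0,1,...,K}. -/
open Real

/-- Throughput of user `i`: `R_i(τ) = τ_i · log₂(1 + γ_i τ_0 / τ_i)` if `τ_i > 0`, else `0`. -/
noncomputable def Rthru {K : ℕ} (γ : Fin K → ℝ) (i : Fin K) (τ : Fin (K + 1) → ℝ) : ℝ :=
  if 0 < τ i.succ then τ i.succ * Real.logb 2 (1 + γ i * τ 0 / τ i.succ) else 0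

/-- Sum-throughput `R_sum(τ) = Σ_{i=1}^K R_i(τ)`. -/
noncomputable def Rsum {K : ℕ} (γ : Fin K → ℝ) (τ : Fin (K + 1) → ℝ) : ℝ :=
  ∑ i, Rthru γ i τ

lemma logb_affine_concave {c : ℝ} (hc : 0 < c) :
    ConcaveOn ℝ (Set.Ici 0) (fun t : ℝ => Real.logb 2 (1 + c * t)) := by
  refine ⟨convex_Ici 0, ?_⟩
  intro x hx y hy a b ha hb hab
  simp only [Set.mem_Ici] at hx hy
  have hu : (0:ℝ) < 1 + c * x := by nlinarith
  have hv : (0:ℝ) < 1 + c * y := by nlinarith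
  have key := (strictConcaveOn_log_Ioi.concaveOn).2 (Set.mem_Ioi.2 hu) (Set.mem_Ioi.2 hv)
      ha hb hab
  have harg : a • (1 + c * x) + b • (1 + c * y) = 1 + c * (a • x + b • y) := by
    simp only [smul_eq_mul]; nlinarith
  rw [harg] at key
  simp only [smul_eq_mul] at key ⊢
  simp only [Real.logb]
  have hlog2 : (0:ℝ) < Real.log 2 := Real.log_pos one_lt_two
  have h2 : a * (Real.log (1 + c * x) / Real.log 2) + b * (Real.log (1 + c * y) / Real.log 2)
      = (a * Real.log (1 + c * x) + b * Real.log (1 + c * y)) / Real.log 2 := by ring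
  rw [h2]
  gcongr

lemma combo_pos {y y' a b : ℝ} (hy : 0 < y) (hy' : 0 < y') (ha : 0 ≤ a) (hb : 0 ≤ b)
    (hab : a + b = 1) : 0 < a * y + b * y' := by
  rcases eq_or_lt_of_le ha with h | h
  · have hb1 : b = 1 := by linarith
    rw [← h, hb1]; simpa using hy'
  · have := mul_pos h hy
    nlinarith [mul_nonneg hb hy'.le]

lemma persp {c : ℝ} (hc : 0 < c) {x x' y y' a b : ℝ} (hx : 0 ≤ x) (hx' : 0 ≤ x')
    (hy : 0 < y) (hy' : 0 < y') (ha : 0 ≤ a) (hb : 0 ≤ b) (hab : a + b = 1) :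
    a * (y * Real.logb 2 (1 + c * x / y)) + b * (y' * Real.logb 2 (1 + c * x' / y'))
      ≤ (a * y + b * y') * Real.logb 2 (1 + c * (a * x + b * x') / (a * y + b * y')) := by
  have hs : 0 < a * y + b * y' := combo_pos hy hy' ha hb hab
  set s := a * y + b * y' with hsdef
  have hu : x / y ∈ Set.Ici (0:ℝ) := Set.mem_Ici.2 (div_nonneg hx hy.le)
  have hv : x' / y' ∈ Set.Ici (0:ℝ) := Set.mem_Ici.2 (div_nonneg hx' hy'.le)
  have hp : 0 ≤ a * y / s := div_nonneg (mul_nonneg ha hy.le) hs.le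
  have hq : 0 ≤ b * y' / s := div_nonneg (mul_nonneg hb hy'.le) hs.le
  have hpq : a * y / s + b * y' / s = 1 := by field_simp; exact hsdef.symm
  have key := (logb_affine_concave hc).2 hu hv hp hq hpq
  simp only [smul_eq_mul] at key
  have harg : a * y / s * (x / y) + b * y' / s * (x' / y') = (a * x + b * x') / s := by
    field_simp
  rw [harg] at key
  have := mul_le_mul_of_nonneg_left key hs.le
  calc a * (y * Real.logb 2 (1 + c * x / y)) + b * (y' * Real.logb 2 (1 + c * x' / y'))
      = s * (a * y / s * Real.logb 2 (1 + c * (x / y)) +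
          b * y' / s * Real.logb 2 (1 + c * (x' / y'))) := by
        rw [mul_div_assoc c x y, mul_div_assoc c x' y']
        field_simp
    _ ≤ s * Real.logb 2 (1 + c * ((a * x + b * x') / s)) := this
    _ = s * Real.logb 2 (1 + c * (a * x + b * x') / s) := by rw [mul_div_assoc]

lemma convex_orthant {K : ℕ} : Convex ℝ {τ : Fin (K + 1) → ℝ | ∀ j, 0 ≤ τ j} := by
  intro τ hτ σ hσ a b ha hb hab j
  simp only [Pi.add_apply, Pi.smul_apply, smul_eq_mul]
  exact add_nonneg (mul_nonneg ha (hτ j)) (mul_nonneg hb (hσ j))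

lemma rthru_concave {K : ℕ} (γ : Fin K → ℝ) (hγ : ∀ i, 0 < γ i) (i : Fin K) :
    ConcaveOn ℝ {τ : Fin (K + 1) → ℝ | ∀ j, 0 ≤ τ j} (Rthru γ i) := by
  refine ⟨convex_orthant, ?_⟩
  intro τ hτ σ hσ a b ha hb hab
  simp only [Rthru, Pi.add_apply, Pi.smul_apply, smul_eq_mul]
  set x := τ 0 with hxd
  set x' := σ 0 with hxd'
  set y := τ i.succ with hyd
  set y' := σ i.succ with hyd'
  have hx : 0 ≤ x := hτ 0
  have hx' : 0 ≤ x' := hσ 0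
  have hy0 : 0 ≤ y := hτ i.succ
  have hy0' : 0 ≤ y' := hσ i.succ
  by_cases hy : 0 < y <;> by_cases hy' : 0 < y'
  · rw [if_pos hy, if_pos hy', if_pos (combo_pos hy hy' ha hb hab)]
    exact persp (hγ i) hx hx' hy hy' ha hb hab
  · have hy'0 : y' = 0 := le_antisymm (not_lt.1 hy') hy0'
    rw [if_pos hy, if_neg hy']
    simp only [hy'0, mul_zero, zero_mul, add_zero]
    rcases eq_or_lt_of_le ha with h | hapos
    · rw [← h]; simp
    · rw [if_pos (mul_pos hapos hy)]
      have hmono : Real.logb 2 (1 + γ i * x / y) ≤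
          Real.logb 2 (1 + γ i * (a * x + b * x') / (a * y)) := by
        apply Real.logb_le_logb_of_le one_lt_two
          (by nlinarith [div_nonneg (mul_nonneg (hγ i).le hx) hy.le])
        have : γ i * x / y ≤ γ i * (a * x + b * x') / (a * y) := by
          rw [div_le_div_iff₀ hy (mul_pos hapos hy)]
          have : 0 ≤ γ i * (b * x') * y :=
            mul_nonneg (mul_nonneg (hγ i).le (mul_nonneg hb hx')) hy0
          nlinarith [hγ i]
        linarith
      calc a * (y * Real.logb 2 (1 + γ i * x / y))
          = (a * y) * Real.logb 2 (1 + γ i * x / y) := by ring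
        _ ≤ (a * y) * Real.logb 2 (1 + γ i * (a * x + b * x') / (a * y)) := by
            exact mul_le_mul_of_nonneg_left hmono (mul_pos hapos hy).le
  · have hy'0 : y = 0 := le_antisymm (not_lt.1 hy) hy0
    rw [if_neg hy, if_pos hy']
    simp only [hy'0, mul_zero, zero_mul, zero_add]
    rcases eq_or_lt_of_le hb with h | hbpos
    · rw [← h]; simp
    · rw [if_pos (mul_pos hbpos hy')]
      have hmono : Real.logb 2 (1 + γ i * x' / y') ≤
          Real.logb 2 (1 + γ i * (a * x + b * x') / (b * y')) := by
        apply Real.logb_le_logb_of_le one_lt_two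
          (by nlinarith [div_nonneg (mul_nonneg (hγ i).le hx') hy'.le])
        have : γ i * x' / y' ≤ γ i * (a * x + b * x') / (b * y') := by
          rw [div_le_div_iff₀ hy' (mul_pos hbpos hy')]
          have : 0 ≤ γ i * (a * x) * y' :=
            mul_nonneg (mul_nonneg (hγ i).le (mul_nonneg ha hx)) hy0' 
          nlinarith [hγ i]
        linarith
      calc b * (y' * Real.logb 2 (1 + γ i * x' / y'))
          = (b * y') * Real.logb 2 (1 + γ i * x' / y') := by ring
        _ ≤ (b * y') * Real.logb 2 (1 + γ i * (a * x + b * x') / (b * y')) := by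
            exact mul_le_mul_of_nonneg_left hmono (mul_pos hbpos hy').le
  · have h1 : y = 0 := le_antisymm (not_lt.1 hy) hy0
    have h2 : y' = 0 := le_antisymm (not_lt.1 hy') hy0'
    rw [if_neg hy, if_neg hy']
    simp [h1, h2]

/-- The sum-throughput is concave on the nonnegative orthant. -/
theorem stmt1 (K : ℕ) (hK : 1 ≤ K) (γ : Fin K → ℝ) (hγ : ∀ i, 0 < γ i) :
    ConcaveOn ℝ {τ : Fin (K + 1) → ℝ | ∀ j, 0 ≤ τ j} (Rsum γ) := by
  have h : ∀ t : Finset (Fin K),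
      ConcaveOn ℝ {τ : Fin (K + 1) → ℝ | ∀ j, 0 ≤ τ j} (fun τ => ∑ i ∈ t, Rthru γ i τ) := by
    intro t
    induction t using Finset.cons_induction with
    | empty => simpa using concaveOn_const 0 convex_orthant
    | cons i t hi ih =>
        have h2 := (rthru_concave γ hγ i).add ih
        simp only [Finset.sum_cons]
        exact h2
  exact h Finset.univ
end

section
/- Let A = Σ_{i=1}^K γ_i and let z* > 1 satisfy z* ln z* − z* + 1 = A. Define τ* ∈ ℝ^{K+1} by τ_0* = (z* − 1)/(A + z* − 1) and τ_i* = γ_i/(A + z* − 1) for i = 1,...,K. Then τ* ∈ D (in fact Σ_{j=0}^K τ_j* = 1 and τ_j* > 0 for all j), and for every τ ∈ D one has R_sum(τ) ≤ R_sum(τ*); i.e., τ* maximizes the sum-throughput over D. -/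
open Real

/-- Feasible set `D = {τ : τ_j ≥ 0 ∀ j, Σ_j τ_j ≤ 1}`. -/
def Dfeas (K : ℕ) : Set (Fin (K + 1) → ℝ) :=
  {τ | (∀ j, 0 ≤ τ j) ∧ ∑ j, τ j ≤ 1}

/-- With `A = Σ γ_i` and `z* > 1` solving `z ln z − z + 1 = A`, the allocation
`τ_0* = (z*−1)/(A+z*−1)`, `τ_i* = γ_i/(A+z*−1)` lies in `D` (with total time `1`
and all components positive) and maximizes the sum-throughput over `D`. -/
theorem stmt4 (K : ℕ) (hK : 1 ≤ K) (γ : Fin K → ℝ) (hγ : ∀ i, 0 < γ i)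
    (A : ℝ) (hA : A = ∑ i, γ i)
    (z : ℝ) (hz : 1 < z) (hzA : z * Real.log z - z + 1 = A)
    (τs : Fin (K + 1) → ℝ)
    (hτ0 : τs 0 = (z - 1) / (A + z - 1))
    (hτi : ∀ i : Fin K, τs i.succ = γ i / (A + z - 1)) :
    τs ∈ Dfeas K ∧ (∑ j, τs j = 1) ∧ (∀ j, 0 < τs j) ∧
    ∀ τ ∈ Dfeas K, Rsum γ τ ≤ Rsum γ τs := by
  have hlog2 : (0:ℝ) < Real.log 2 := Real.log_pos (by norm_num)
  have hlz : 0 < Real.log z := Real.log_pos hz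
  have hz0 : (0:ℝ) < z := by linarith
  have hne : Nonempty (Fin K) := Fin.pos_iff_nonempty.mp hK
  have hA0 : 0 < A := by
    rw [hA]
    exact Finset.sum_pos (fun i _ => hγ i) Finset.univ_nonempty
  have hS0 : 0 < A + z - 1 := by linarith
  have hSz : A + z - 1 = z * Real.log z := by rw [← hzA]; ring
  -- positivity
  have hpos : ∀ j, 0 < τs j := by
    intro j
    refine Fin.cases ?_ ?_ j
    · rw [hτ0]; exact div_pos (by linarith) hS0
    · intro i; rw [hτi i]; exact div_pos (hγ i) hS0
  -- sum = 1
  have hsucc : ∑ i : Fin K, τs i.succ = A / (A + z - 1) := by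
    simp only [hτi]
    rw [← Finset.sum_div, ← hA]
  have hsum : ∑ j, τs j = 1 := by
    rw [Fin.sum_univ_succ, hτ0, hsucc, ← add_div,
      div_eq_one_iff_eq hS0.ne']
    ring
  -- value at optimum
  have hval : Rsum γ τs = A / z / Real.log 2 := by
    unfold Rsum Rthru
    have hpt : ∀ i : Fin K,
        (if 0 < τs i.succ then τs i.succ * Real.logb 2 (1 + γ i * τs 0 / τs i.succ) else 0)
          = γ i / (A + z - 1) * (Real.log z / Real.log 2) := by
      intro i
      rw [if_pos (hpos i.succ)]
      have harg : 1 + γ i * τs 0 / τs i.succ = z := by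
        rw [hτ0, hτi]
        field_simp
        rw [mul_comm (γ i) (z-1), mul_div_assoc, div_self (hγ i).ne', mul_one]
        ring
      rw [harg, hτi, Real.logb]
    rw [Finset.sum_congr rfl (fun i _ => hpt i), ← Finset.sum_mul, ← Finset.sum_div, ← hA, hSz]
    field_simp
  refine ⟨⟨fun j => (hpos j).le, hsum.le⟩, hsum, hpos, ?_⟩
  intro τ hτ
  obtain ⟨hnn, hle⟩ := hτ
  rw [hval]
  have key : ∀ i : Fin K,
      Rthru γ i τ ≤ (A / z * τ i.succ + γ i * τ 0 / z) / Real.log 2 := by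
    intro i
    unfold Rthru
    by_cases ht : 0 < τ i.succ
    · rw [if_pos ht]
      set t := τ i.succ with htdef
      have hu : 0 ≤ γ i * τ 0 / t := div_nonneg (mul_nonneg (hγ i).le (hnn 0)) ht.le
      have hw : 0 < 1 + γ i * τ 0 / t := by linarith
      have hlb : Real.log (1 + γ i * τ 0 / t) ≤ Real.log z + (1 + γ i * τ 0 / t) / z - 1 := by
        have h := Real.log_le_sub_one_of_pos (x := (1 + γ i * τ 0 / t) / z)
          (div_pos hw hz0)
        rw [Real.log_div hw.ne' hz0.ne'] at h
        linarith
      have h1 : t * Real.log (1 + γ i * τ 0 / t) ≤ A / z * t + γ i * τ 0 / z := by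
        have h2 : t * (Real.log z + (1 + γ i * τ 0 / t) / z - 1)
            = A / z * t + γ i * τ 0 / z := by
          rw [← hzA]
          field_simp
          ring
        calc t * Real.log (1 + γ i * τ 0 / t)
            ≤ t * (Real.log z + (1 + γ i * τ 0 / t) / z - 1) :=
              mul_le_mul_of_nonneg_left hlb ht.le
          _ = A / z * t + γ i * τ 0 / z := h2
      rw [Real.logb, ← mul_div_assoc]
      exact div_le_div_of_nonneg_right h1 hlog2.le
    · rw [if_neg ht]
      apply div_nonneg _ hlog2.le
      have h1 : 0 ≤ A / z * τ i.succ := mul_nonneg (div_nonneg hA0.le hz0.le) (hnn _)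
      have h2 : 0 ≤ γ i * τ 0 / z := div_nonneg (mul_nonneg (hγ i).le (hnn 0)) hz0.le
      linarith
  have hTnn : 0 ≤ ∑ i : Fin K, τ i.succ :=
    Finset.sum_nonneg (fun i _ => hnn _)
  have hsum' : τ 0 + ∑ i : Fin K, τ i.succ ≤ 1 := by
    rw [← Fin.sum_univ_succ]; exact hle
  calc Rsum γ τ ≤ ∑ i : Fin K, (A / z * τ i.succ + γ i * τ 0 / z) / Real.log 2 :=
        Finset.sum_le_sum (fun i _ => key i)
    _ = (A / z * (∑ i : Fin K, τ i.succ) + A * τ 0 / z) / Real.log 2 := by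
        rw [← Finset.sum_div]
        congr 1
        rw [Finset.sum_add_distrib, ← Finset.mul_sum, ← Finset.sum_div, ← Finset.sum_mul, ← hA]
    _ ≤ A / z / Real.log 2 := by
        apply div_le_div_of_nonneg_right ?_ hlog2.le
        have hAz : 0 < A / z := div_pos hA0 hz0
        calc A / z * (∑ i : Fin K, τ i.succ) + A * τ 0 / z
            = A / z * (τ 0 + ∑ i : Fin K, τ i.succ) := by ring
          _ ≤ A / z * 1 := mul_le_mul_of_nonneg_left hsum' hAz.le
          _ = A / z := mul_one _
end

section
/- Let A = Σ_{i=1}^K γ_i and let z* > 1 satisfy z* ln z* − z* + 1 = A, and define τ* by τ_0* = (z* − 1)/(A + z* − 1) and τ_i* = γ_i/(A + z* − 1) for i = 1,...,K. Then τ* is the unique maximizer of R_sum over D: for every τ ∈ D with τ ≠ τ*, R_sum(τ) < R_sum(τ*). -/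
open Real

lemma term_le (z g t0 t : ℝ) (hz : 1 < z) (hg : 0 < g) (h0 : 0 ≤ t0) (ht : 0 ≤ t) :
    (if 0 < t then t * Real.log (1 + g * t0 / t) else 0)
      ≤ t * Real.log z + (t * (1 - z) + g * t0) / z := by
  have hz0 : (0:ℝ) < z := by linarith
  rcases eq_or_lt_of_le ht with hte | htp
  · subst hte
    simp
    positivity
  · rw [if_pos htp]
    have hy0 : (0:ℝ) < 1 + g * t0 / t := by positivity
    have hlog : Real.log (1 + g * t0 / t) ≤ Real.log z + ((1 + g * t0 / t) - z) / z := by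
      have h := Real.log_le_sub_one_of_pos (show 0 < (1 + g * t0 / t) / z by positivity)
      rw [Real.log_div (ne_of_gt hy0) (ne_of_gt hz0)] at h
      have heq : ((1 + g * t0 / t) - z) / z = (1 + g * t0 / t) / z - 1 := by field_simp
      linarith
    calc t * Real.log (1 + g * t0 / t)
        ≤ t * (Real.log z + ((1 + g * t0 / t) - z) / z) :=
          mul_le_mul_of_nonneg_left hlog htp.le
      _ = t * Real.log z + (t * (1 - z) + g * t0) / z := by field_simp; ring

lemma term_lt (z g t0 t : ℝ) (hz : 1 < z) (hg : 0 < g) (h0 : 0 ≤ t0) (ht : 0 ≤ t)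
    (hP : ¬((0 < t ∧ 1 + g * t0 / t = z) ∨ (t = 0 ∧ t0 = 0))) :
    (if 0 < t then t * Real.log (1 + g * t0 / t) else 0)
      < t * Real.log z + (t * (1 - z) + g * t0) / z := by
  have hz0 : (0:ℝ) < z := by linarith
  push_neg at hP
  rcases eq_or_lt_of_le ht with hte | htp
  · subst hte
    have ht0 : t0 ≠ 0 := hP.2 rfl
    have ht0p : 0 < t0 := lt_of_le_of_ne h0 (Ne.symm ht0)
    simp
    positivity
  · rw [if_pos htp]
    have hne : 1 + g * t0 / t ≠ z := hP.1 htp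
    have hy0 : (0:ℝ) < 1 + g * t0 / t := by positivity
    have hlog : Real.log (1 + g * t0 / t) < Real.log z + ((1 + g * t0 / t) - z) / z := by
      have h := Real.log_lt_sub_one_of_pos (show 0 < (1 + g * t0 / t) / z by positivity)
        (by
          intro hcon
          apply hne
          field_simp at hcon ⊢
          linarith)
      rw [Real.log_div (ne_of_gt hy0) (ne_of_gt hz0)] at h
      have heq : ((1 + g * t0 / t) - z) / z = (1 + g * t0 / t) / z - 1 := by field_simp
      linarith
    calc t * Real.log (1 + g * t0 / t)
        < t * (Real.log z + ((1 + g * t0 / t) - z) / z) :=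
          (mul_lt_mul_iff_right₀ htp).mpr hlog
      _ = t * Real.log z + (t * (1 - z) + g * t0) / z := by field_simp; ring

/-- With `A = Σ γ_i` and `z* > 1` solving `z ln z − z + 1 = A`, the allocation
`τ_0* = (z*−1)/(A+z*−1)`, `τ_i* = γ_i/(A+z*−1)` is the unique maximizer of the
sum-throughput over `D`: every other feasible `τ` achieves strictly less. -/
theorem stmt5 (K : ℕ) (hK : 1 ≤ K) (γ : Fin K → ℝ) (hγ : ∀ i, 0 < γ i)
    (A : ℝ) (hA : A = ∑ i, γ i)
    (z : ℝ) (hz : 1 < z) (hzA : z * Real.log z - z + 1 = A)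
    (τs : Fin (K + 1) → ℝ)
    (hτ0 : τs 0 = (z - 1) / (A + z - 1))
    (hτi : ∀ i : Fin K, τs i.succ = γ i / (A + z - 1)) :
    ∀ τ ∈ Dfeas K, τ ≠ τs → Rsum γ τ < Rsum γ τs := by
  intro τ hτ hne
  obtain ⟨hpos, hsum⟩ := hτ
  have hz0 : (0:ℝ) < z := by linarith
  have hz1 : (0:ℝ) < z - 1 := by linarith
  have hlz : 0 < Real.log z := Real.log_pos hz
  have hNe : Nonempty (Fin K) := ⟨⟨0, hK⟩⟩
  have hA0 : 0 < A := by
    rw [hA]; exact Finset.sum_pos (fun i _ => hγ i) Finset.univ_nonempty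
  have hc : 0 < A + z - 1 := by linarith
  have hzlog : z * Real.log z = A + z - 1 := by linarith
  have hlog2 : (0:ℝ) < Real.log 2 := Real.log_pos one_lt_two
  -- value at τs
  have hRs : Rsum γ τs * Real.log 2 = A / z := by
    have h1 : ∀ i : Fin K, Rthru γ i τs = γ i / (A + z - 1) * (Real.log z / Real.log 2) := by
      intro i
      have hgi := hγ i
      have htpos : 0 < τs i.succ := by rw [hτi i]; positivity
      have harg : 1 + γ i * τs 0 / τs i.succ = z := by
        rw [hτi i, hτ0]; field_simp; ring
      rw [Rthru, if_pos htpos, harg, hτi i, Real.logb]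
    rw [Rsum]
    simp only [h1]
    rw [← Finset.sum_mul, ← Finset.sum_div, ← hA]
    have e1 : A / (A + z - 1) * (Real.log z / Real.log 2) * Real.log 2
        = A * Real.log z / (A + z - 1) := by field_simp
    rw [e1, ← hzlog]
    field_simp
  -- rewrite Rsum τ * log 2
  have hRτ : Rsum γ τ * Real.log 2
      = ∑ i, (if 0 < τ i.succ then τ i.succ * Real.log (1 + γ i * τ 0 / τ i.succ) else 0) := by
    rw [Rsum, Finset.sum_mul]
    refine Finset.sum_congr rfl fun i _ => ?_
    rw [Rthru]
    split_ifs with h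
    · rw [Real.logb]; field_simp
    · simp
  -- sum of upper bounds
  have hU : (∑ i : Fin K, (τ i.succ * Real.log z + (τ i.succ * (1 - z) + γ i * τ 0) / z))
      = A * (τ 0 + ∑ i : Fin K, τ i.succ) / z := by
    rw [Finset.sum_add_distrib, ← Finset.sum_mul, ← Finset.sum_div, Finset.sum_add_distrib,
      ← Finset.sum_mul, ← Finset.sum_mul, ← hA]
    have hlz' : Real.log z = (A + z - 1) / z := by field_simp; linarith
    rw [hlz']
    field_simp
    ring
  have hS : ∑ j, τ j = τ 0 + ∑ i : Fin K, τ i.succ := Fin.sum_univ_succ τ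
  have hT0 : 0 ≤ ∑ i : Fin K, τ i.succ := Finset.sum_nonneg fun i _ => hpos i.succ
  -- main bound
  have hmain : Rsum γ τ * Real.log 2 < A / z := by
    rw [hRτ]
    rcases eq_or_lt_of_le hsum with hSeq | hSlt
    · -- total = 1 : find a strict term
      have hex : ∃ i : Fin K,
          ¬((0 < τ i.succ ∧ 1 + γ i * τ 0 / τ i.succ = z) ∨ (τ i.succ = 0 ∧ τ 0 = 0)) := by
        by_contra hall
        simp only [not_exists, not_not] at hall
        apply hne
        have hτ0p : 0 < τ 0 := by
          rcases eq_or_lt_of_le (hpos 0) with h00 | h00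
          · exfalso
            have hzero : ∀ i : Fin K, τ i.succ = 0 := by
              intro i
              rcases hall i with ⟨hpi, heq⟩ | ⟨h1, _⟩
              · exfalso; rw [← h00] at heq; simp at heq; linarith
              · exact h1
            have hTz : ∑ i : Fin K, τ i.succ = 0 := Finset.sum_eq_zero fun i _ => hzero i
            rw [hS, ← h00, hTz] at hSeq; norm_num at hSeq
          · exact h00
        have hti : ∀ i : Fin K, τ i.succ = γ i * τ 0 / (z - 1) := by
          intro i
          rcases hall i with ⟨hpi, heq⟩ | ⟨_, h00⟩
          · have h2 : γ i * τ 0 / τ i.succ = z - 1 := by linarith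
            field_simp at h2 ⊢
            linarith
          · exfalso; linarith
        have hTval : ∑ i : Fin K, τ i.succ = A * τ 0 / (z - 1) := by
          rw [Finset.sum_congr rfl fun i _ => hti i, ← Finset.sum_div, ← Finset.sum_mul, ← hA]
        have hτ0v : τ 0 = (z - 1) / (A + z - 1) := by
          rw [hS, hTval] at hSeq
          field_simp at hSeq ⊢
          linarith
        funext j
        refine Fin.cases ?_ (fun i => ?_) j
        · rw [hτ0v, hτ0]
        · rw [hti i, hτ0v, hτi i]
          field_simp
      obtain ⟨i0, hi0⟩ := hex
      calc (∑ i, (if 0 < τ i.succ then τ i.succ * Real.log (1 + γ i * τ 0 / τ i.succ) else 0))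
          < ∑ i : Fin K, (τ i.succ * Real.log z + (τ i.succ * (1 - z) + γ i * τ 0) / z) :=
            Finset.sum_lt_sum
              (fun i _ => term_le z (γ i) (τ 0) (τ i.succ) hz (hγ i) (hpos 0) (hpos i.succ))
              ⟨i0, Finset.mem_univ _,
                term_lt z (γ i0) (τ 0) (τ i0.succ) hz (hγ i0) (hpos 0) (hpos i0.succ) hi0⟩
        _ = A * (τ 0 + ∑ i : Fin K, τ i.succ) / z := hU
        _ = A / z := by rw [← hS, hSeq, mul_one]
    · -- total < 1
      calc (∑ i, (if 0 < τ i.succ then τ i.succ * Real.log (1 + γ i * τ 0 / τ i.succ) else 0))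
          ≤ ∑ i : Fin K, (τ i.succ * Real.log z + (τ i.succ * (1 - z) + γ i * τ 0) / z) :=
            Finset.sum_le_sum
              (fun i _ => term_le z (γ i) (τ 0) (τ i.succ) hz (hγ i) (hpos 0) (hpos i.succ))
        _ = A * (τ 0 + ∑ i : Fin K, τ i.succ) / z := hU
        _ < A / z := by
            rw [← hS, div_lt_div_iff₀ hz0 hz0]
            nlinarith [mul_pos hA0 hz0]
  have hfin : Rsum γ τ * Real.log 2 < Rsum γ τs * Real.log 2 := by rw [hRs]; exact hmain
  exact lt_of_mul_lt_mul_right hfin hlog2.le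
end

section
/- The function A ↦ τ_0*(A) = (z*(A) − 1)/(A + z*(A) − 1) is strictly decreasing on (0,∞): for all 0 < A₁ < A₂ one has τ_0*(A₂) < τ_0*(A₁). -/
open Real Set

private lemma g_mono : StrictMonoOn (fun z : ℝ => z * Real.log z - z + 1) (Set.Ici 1) := by
  apply strictMonoOn_of_deriv_pos (convex_Ici 1)
  · intro z hz
    have hz0 : (0:ℝ) < z := lt_of_lt_of_le one_pos hz
    exact (((continuousAt_id.mul (Real.continuousAt_log hz0.ne')).sub
      continuousAt_id).add continuousAt_const).continuousWithinAt
  · intro z hz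
    rw [interior_Ici] at hz
    have hz0 : (0:ℝ) < z := lt_trans one_pos hz
    have h : HasDerivAt (fun z : ℝ => z * Real.log z - z + 1) (Real.log z) z := by
      have h1 : HasDerivAt (fun z : ℝ => z * Real.log z) (1 * Real.log z + z * z⁻¹) z :=
        (hasDerivAt_id z).mul (Real.hasDerivAt_log hz0.ne')
      have h2 := (h1.sub (hasDerivAt_id z)).add_const 1
      simpa [mul_inv_cancel₀ hz0.ne'] using h2
    rw [h.deriv]
    exact Real.log_pos hz

private lemma f_anti : StrictAntiOn (fun z : ℝ => (z - 1) / (z * Real.log z)) (Set.Ioi 1) := by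
  apply strictAntiOn_of_deriv_neg (convex_Ioi 1)
  · intro z hz
    have hz0 : (0:ℝ) < z := lt_trans one_pos hz
    have hv : z * Real.log z ≠ 0 :=
      (mul_pos hz0 (Real.log_pos hz)).ne'
    exact (((continuousAt_id.sub continuousAt_const).div
      (continuousAt_id.mul (Real.continuousAt_log hz0.ne')) hv).continuousWithinAt)
  · intro z hz
    rw [interior_Ioi] at hz
    have hz0 : (0:ℝ) < z := lt_trans one_pos hz
    have hlog : 0 < Real.log z := Real.log_pos hz
    have hv : z * Real.log z ≠ 0 := (mul_pos hz0 hlog).ne'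
    have hu : HasDerivAt (fun z : ℝ => z - 1) 1 z := by
      simpa using (hasDerivAt_id z).sub_const 1
    have hv' : HasDerivAt (fun z : ℝ => z * Real.log z) (1 * Real.log z + z * z⁻¹) z :=
      (hasDerivAt_id z).mul (Real.hasDerivAt_log hz0.ne')
    have h := hu.div hv' hv
    rw [show (fun z : ℝ => (z - 1) / (z * Real.log z)) = ((fun z : ℝ => z - 1) / fun z => z * Real.log z) from rfl, h.deriv]
    have hnum : 1 * (z * Real.log z) - (z - 1) * (1 * Real.log z + z * z⁻¹) < 0 := by
      have : z * z⁻¹ = 1 := mul_inv_cancel₀ hz0.ne'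
      rw [this]
      have hlt : Real.log z < z - 1 := Real.log_lt_sub_one_of_pos hz0 hz.ne'
      nlinarith
    have hden : 0 < (z * Real.log z) ^ 2 := by positivity
    exact div_neg_of_neg_of_pos hnum hden

/-- The optimal downlink time allocation `τ_0*(A) = (z*(A)−1)/(A+z*(A)−1)`, where
`z*(A) > 1` solves `z ln z − z + 1 = A`, is strictly decreasing in `A` on `(0,∞)`. -/
theorem stmt6 (zs : ℝ → ℝ)
    (hzs : ∀ A : ℝ, 0 < A → 1 < zs A ∧ zs A * Real.log (zs A) - zs A + 1 = A) :
    ∀ A₁ A₂ : ℝ, 0 < A₁ → A₁ < A₂ →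
      (zs A₂ - 1) / (A₂ + zs A₂ - 1) < (zs A₁ - 1) / (A₁ + zs A₁ - 1) := by
  intro A₁ A₂ hA₁ hlt
  obtain ⟨hz1, he1⟩ := hzs A₁ hA₁
  obtain ⟨hz2, he2⟩ := hzs A₂ (lt_trans hA₁ hlt)
  have hzz : zs A₁ < zs A₂ := by
    by_contra h
    push_neg at h
    have := g_mono.monotoneOn (Set.mem_Ici.mpr hz2.le) (Set.mem_Ici.mpr hz1.le) h
    rw [he1, he2] at this
    exact absurd this (not_le.mpr hlt)
  have h1 : A₁ + zs A₁ - 1 = zs A₁ * Real.log (zs A₁) := by linarith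
  have h2 : A₂ + zs A₂ - 1 = zs A₂ * Real.log (zs A₂) := by linarith
  rw [h1, h2]
  exact f_anti (Set.mem_Ioi.mpr hz1) (Set.mem_Ioi.mpr hz2) hzz
end

section
/- The optimal downlink time allocation tends to zero as the sum SNR grows: τ_0*(A) = (z*(A) − 1)/(A + z*(A) − 1) → 0 as A → ∞. -/
open Real Filter

/-- The optimal downlink time allocation `τ_0*(A) = (z*(A)−1)/(A+z*(A)−1)` tends to
`0` as `A → ∞`, where `z*(A) > 1` solves `z ln z − z + 1 = A`. -/
theorem stmt9 (zs : ℝ → ℝ)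
    (hzs : ∀ A : ℝ, 0 < A → 1 < zs A ∧ zs A * Real.log (zs A) - zs A + 1 = A) :
    Tendsto (fun A : ℝ => (zs A - 1) / (A + zs A - 1)) atTop (nhds 0) := by
  have hlim : Tendsto (fun A : ℝ => 2 / Real.log A) atTop (nhds 0) :=
    tendsto_const_nhds.div_atTop Real.tendsto_log_atTop
  refine tendsto_of_tendsto_of_tendsto_of_le_of_le' tendsto_const_nhds hlim ?_ ?_
  · filter_upwards [eventually_gt_atTop (1 : ℝ)] with A hA
    obtain ⟨hz1, heq⟩ := hzs A (by linarith)
    have hlz : 0 < Real.log (zs A) := Real.log_pos hz1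
    have hden : A + zs A - 1 = zs A * Real.log (zs A) := by linarith
    rw [hden]
    exact div_nonneg (by linarith) (by nlinarith)
  · filter_upwards [eventually_gt_atTop (1 : ℝ)] with A hA
    obtain ⟨hz1, heq⟩ := hzs A (by linarith)
    have hz0 : 0 < zs A := by linarith
    have hlz : 0 < Real.log (zs A) := Real.log_pos hz1
    have hlA : 0 < Real.log A := Real.log_pos hA
    have hden : A + zs A - 1 = zs A * Real.log (zs A) := by linarith
    rw [hden]
    have h1 : (zs A - 1) / (zs A * Real.log (zs A)) ≤ 1 / Real.log (zs A) := by
      rw [div_le_div_iff₀ (by positivity) hlz]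
      nlinarith
    have h2 : Real.log A ≤ 2 * Real.log (zs A) := by
      have hls : Real.log (zs A) ≤ zs A - 1 := Real.log_le_sub_one_of_pos hz0
      have hA2 : A ≤ zs A ^ 2 := by nlinarith
      calc Real.log A ≤ Real.log (zs A ^ 2) := Real.log_le_log (by linarith) hA2
        _ = 2 * Real.log (zs A) := by
            rw [Real.log_pow]; push_cast; ring
    have h3 : 1 / Real.log (zs A) ≤ 2 / Real.log A := by
      rw [div_le_div_iff₀ hlz hlA]; linarith
    linarith
end

section
/- Fix R̄ > 0. The following are equivalent: (i) there is no τ ∈ D with R_i(τ) ≥ R̄ for all i = 1,...,K; (ii) there exists λ = (λ_1,...,λ_K) ∈ ℝ^K with λ_i ≥ 0 for all i such that the infimum over τ ∈ D of −Σ_{i=1}^K λ_i (R_i(τ) − R̄) is strictly positive (equivalently, there is c > 0 with Σ_{i=1}^K λ_i (R_i(τ) − R̄) ≤ −c for every τ ∈ D). -/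
open Real

section aux

variable {K : ℕ} {γ : Fin K → ℝ}

lemma Dfeas_coord_le_one {τ : Fin (K+1) → ℝ} (hτ : τ ∈ Dfeas K) (j : Fin (K+1)) : τ j ≤ 1 :=
  le_trans (Finset.single_le_sum (fun k _ => hτ.1 k) (Finset.mem_univ j)) hτ.2

lemma zero_mem_Dfeas : (0 : Fin (K+1) → ℝ) ∈ Dfeas K := by
  constructor
  · intro j; simp
  · simp

lemma Rthru_zero (i : Fin K) : Rthru γ i 0 = 0 := by
  simp [Rthru]

lemma Rthru_nonneg (hγ : ∀ i, 0 < γ i) (i : Fin K) {τ : Fin (K+1) → ℝ}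
    (hτ : τ ∈ Dfeas K) : 0 ≤ Rthru γ i τ := by
  unfold Rthru
  split_ifs with h
  · refine mul_nonneg h.le (Real.logb_nonneg one_lt_two ?_)
    have h0 : 0 ≤ γ i * τ 0 / τ i.succ :=
      div_nonneg (mul_nonneg (hγ i).le (hτ.1 0)) h.le
    linarith
  · exact le_refl 0

lemma log_one_add_le_two_sqrt {x : ℝ} (hx : 0 ≤ x) :
    Real.log (1 + x) ≤ 2 * Real.sqrt x := by
  have h1 : (0:ℝ) < 1 + x := by linarith
  have h2 : Real.log (1 + x) = 2 * Real.log (Real.sqrt (1 + x)) := by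
    rw [Real.log_sqrt h1.le]; ring
  have h3 : Real.log (Real.sqrt (1 + x)) ≤ Real.sqrt (1 + x) - 1 :=
    Real.log_le_sub_one_of_pos (Real.sqrt_pos.2 h1)
  have h4 : Real.sqrt (1 + x) ≤ 1 + Real.sqrt x := by
    rw [show (1:ℝ) + Real.sqrt x = Real.sqrt ((1 + Real.sqrt x)^2) from
      (Real.sqrt_sq (by positivity)).symm]
    apply Real.sqrt_le_sqrt
    nlinarith [Real.sq_sqrt hx, Real.sqrt_nonneg x]
  linarith

lemma Rthru_le_sqrt (hγ : ∀ i, 0 < γ i) (i : Fin K) {τ : Fin (K+1) → ℝ}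
    (hτ : τ ∈ Dfeas K) :
    Rthru γ i τ ≤ (2 / Real.log 2) * Real.sqrt (γ i) * Real.sqrt (τ i.succ) := by
  have hlog2 : 0 < Real.log 2 := Real.log_pos one_lt_two
  unfold Rthru
  split_ifs with h
  · set x := γ i * τ 0 / τ i.succ with hxdef
    have hx : 0 ≤ x := div_nonneg (mul_nonneg (hγ i).le (hτ.1 0)) h.le
    have hb : Real.logb 2 (1 + x) ≤ 2 * Real.sqrt x / Real.log 2 := by
      rw [Real.logb]
      gcongr
      exact log_one_add_le_two_sqrt hx
    have key : τ i.succ * Real.sqrt x ≤ Real.sqrt (γ i) * Real.sqrt (τ i.succ) := by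
      rw [← Real.sqrt_mul (hγ i).le]
      rw [Real.le_sqrt (mul_nonneg h.le (Real.sqrt_nonneg _))
        (mul_nonneg (hγ i).le h.le)]
      have hxeq : x * τ i.succ = γ i * τ 0 := by
        rw [hxdef]; field_simp
      have ht0 : τ 0 ≤ 1 := Dfeas_coord_le_one hτ 0
      have hsq : Real.sqrt x ^ 2 = x := Real.sq_sqrt hx
      have e1 : (τ i.succ * Real.sqrt x)^2 = τ i.succ * (γ i * τ 0) := by
        rw [mul_pow, hsq, ← hxeq]; ring
      nlinarith [e1, mul_nonneg (mul_nonneg (hγ i).le h.le) (sub_nonneg.2 ht0)]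
    calc τ i.succ * Real.logb 2 (1 + x)
        ≤ τ i.succ * (2 * Real.sqrt x / Real.log 2) :=
          mul_le_mul_of_nonneg_left hb h.le
      _ = (2 / Real.log 2) * (τ i.succ * Real.sqrt x) := by ring
      _ ≤ (2 / Real.log 2) * (Real.sqrt (γ i) * Real.sqrt (τ i.succ)) := by
          apply mul_le_mul_of_nonneg_left key (by positivity)
      _ = (2 / Real.log 2) * Real.sqrt (γ i) * Real.sqrt (τ i.succ) := by ring
  · positivity

lemma Rthru_continuousOn (hγ : ∀ i, 0 < γ i) (i : Fin K) :
    ContinuousOn (Rthru γ i) (Dfeas K) := by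
  intro τ hτ
  by_cases h : 0 < τ i.succ
  · have hev : ∀ᶠ σ in nhdsWithin τ (Dfeas K), 0 < σ i.succ :=
      (((continuous_apply i.succ).tendsto τ).eventually (eventually_gt_nhds h)).filter_mono
        nhdsWithin_le_nhds
    have hc : ContinuousWithinAt
        (fun σ : Fin (K+1) → ℝ => σ i.succ * Real.logb 2 (1 + γ i * σ 0 / σ i.succ))
        (Dfeas K) τ := by
      apply ContinuousAt.continuousWithinAt
      have h1 : ContinuousAt (fun σ : Fin (K+1) → ℝ => 1 + γ i * σ 0 / σ i.succ) τ :=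
        ContinuousAt.add continuousAt_const
          (ContinuousAt.div (ContinuousAt.mul continuousAt_const
            (continuous_apply 0).continuousAt)
            (continuous_apply i.succ).continuousAt (ne_of_gt h))
      have harg : (1 : ℝ) + γ i * τ 0 / τ i.succ ≠ 0 := by
        have h2 : 0 ≤ γ i * τ 0 / τ i.succ :=
          div_nonneg (mul_nonneg (hγ i).le (hτ.1 0)) h.le
        intro hzero; linarith
      have h2 : ContinuousAt
          (fun σ : Fin (K+1) → ℝ => Real.logb 2 (1 + γ i * σ 0 / σ i.succ)) τ :=
        ContinuousAt.comp (f := fun σ : Fin (K+1) → ℝ => 1 + γ i * σ 0 / σ i.succ)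
          (Real.continuousAt_logb harg) h1
      exact ((continuous_apply i.succ).continuousAt).mul h2
    refine hc.congr_of_eventuallyEq (hev.mono fun σ hσ => ?_) (if_pos h)
    exact if_pos hσ
  · have h0 : τ i.succ = 0 := le_antisymm (not_lt.1 h) (hτ.1 _)
    have hRτ : Rthru γ i τ = 0 := if_neg h
    unfold ContinuousWithinAt
    rw [hRτ]
    apply squeeze_zero'
      (eventually_mem_nhdsWithin.mono fun σ hσ => Rthru_nonneg hγ i hσ)
      (eventually_mem_nhdsWithin.mono fun σ hσ => Rthru_le_sqrt hγ i hσ)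
    have ht : Filter.Tendsto
        (fun σ : Fin (K+1) → ℝ => (2 / Real.log 2) * Real.sqrt (γ i) * Real.sqrt (σ i.succ))
        (nhds τ)
        (nhds ((2 / Real.log 2) * Real.sqrt (γ i) * Real.sqrt (τ i.succ))) :=
      ((continuous_const.mul (Real.continuous_sqrt.comp (continuous_apply i.succ))).tendsto τ)
    rw [h0, Real.sqrt_zero, mul_zero] at ht
    exact ht.mono_left nhdsWithin_le_nhds

lemma convex_Dfeas : Convex ℝ (Dfeas K) := by
  intro a ha b hb s t hs ht hst
  constructor
  · intro j
    exact add_nonneg (mul_nonneg hs (ha.1 j)) (mul_nonneg ht (hb.1 j))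
  · have : ∑ j, (s • a + t • b) j = s * ∑ j, a j + t * ∑ j, b j := by
      simp [Finset.sum_add_distrib, Finset.mul_sum]
    rw [this]
    nlinarith [ha.2, hb.2]

lemma isCompact_Dfeas : IsCompact (Dfeas K) := by
  have hclosed : IsClosed (Dfeas K) := by
    have heq : Dfeas K =
        (⋂ j, {τ : Fin (K+1) → ℝ | 0 ≤ τ j}) ∩ {τ : Fin (K+1) → ℝ | ∑ j, τ j ≤ 1} := by
      ext τ; simp [Dfeas, Set.mem_iInter]
    rw [heq]
    exact (isClosed_iInter fun j =>
        isClosed_le continuous_const (continuous_apply j)).inter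
      (isClosed_le (continuous_finset_sum _ fun j _ => continuous_apply j) continuous_const)
  have hbdd : Bornology.IsBounded (Dfeas K) := by
    apply (Metric.isBounded_closedBall (x := (0 : Fin (K+1) → ℝ)) (r := 1)).subset
    intro τ hτ
    rw [Metric.mem_closedBall, dist_zero_right]
    rw [pi_norm_le_iff_of_nonneg zero_le_one]
    intro j
    rw [Real.norm_eq_abs, abs_of_nonneg (hτ.1 j)]
    exact Dfeas_coord_le_one hτ j
  exact Metric.isCompact_of_isClosed_isBounded hclosed hbdd

/-- core perspective/Jensen inequality, both parts active -/
lemma logb_core {g x1 y1 x2 y2 s t : ℝ} (hg : 0 < g) (hx1 : 0 ≤ x1) (hx2 : 0 ≤ x2)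
    (hy1 : 0 < y1) (hy2 : 0 < y2) (hs : 0 < s) (ht : 0 < t) :
    s * y1 * Real.logb 2 (1 + g * x1 / y1) + t * y2 * Real.logb 2 (1 + g * x2 / y2) ≤
      (s * y1 + t * y2) * Real.logb 2 (1 + g * (s * x1 + t * x2) / (s * y1 + t * y2)) := by
  have hlog2 : 0 < Real.log 2 := Real.log_pos one_lt_two
  set u := s * y1 with hudef
  set v := t * y2 with hvdef
  have hu : 0 < u := mul_pos hs hy1
  have hv : 0 < v := mul_pos ht hy2
  have hw : 0 < u + v := by linarith
  have hd1 : 0 ≤ g * x1 / y1 := by positivity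
  have hd2 : 0 ≤ g * x2 / y2 := by positivity
  have hp1 : (0:ℝ) < 1 + g * x1 / y1 := by linarith
  have hp2 : (0:ℝ) < 1 + g * x2 / y2 := by linarith
  have jensen := (strictConcaveOn_log_Ioi.concaveOn).2 (Set.mem_Ioi.2 hp1)
    (Set.mem_Ioi.2 hp2) (by positivity : (0:ℝ) ≤ u / (u + v))
    (by positivity : (0:ℝ) ≤ v / (u + v)) (by field_simp)
  rw [smul_eq_mul, smul_eq_mul, smul_eq_mul, smul_eq_mul] at jensen
  have combo : u / (u + v) * (1 + g * x1 / y1) + v / (u + v) * (1 + g * x2 / y2)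
      = 1 + g * (s * x1 + t * x2) / (u + v) := by
    rw [hudef, hvdef]
    field_simp
    ring
  rw [combo] at jensen
  have key : u * Real.log (1 + g * x1 / y1) + v * Real.log (1 + g * x2 / y2) ≤
      (u + v) * Real.log (1 + g * (s * x1 + t * x2) / (u + v)) := by
    have h := mul_le_mul_of_nonneg_left jensen hw.le
    calc u * Real.log (1 + g * x1 / y1) + v * Real.log (1 + g * x2 / y2)
        = (u + v) * (u / (u + v) * Real.log (1 + g * x1 / y1)
            + v / (u + v) * Real.log (1 + g * x2 / y2)) := by field_simp
      _ ≤ (u + v) * Real.log (1 + g * (s * x1 + t * x2) / (u + v)) := h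
  calc u * Real.logb 2 (1 + g * x1 / y1) + v * Real.logb 2 (1 + g * x2 / y2)
      = (u * Real.log (1 + g * x1 / y1) + v * Real.log (1 + g * x2 / y2)) / Real.log 2 := by
        rw [Real.logb, Real.logb]; ring
    _ ≤ ((u + v) * Real.log (1 + g * (s * x1 + t * x2) / (u + v))) / Real.log 2 := by
        gcongr
    _ = (u + v) * Real.logb 2 (1 + g * (s * x1 + t * x2) / (u + v)) := by
        rw [Real.logb]; ring

/-- two-point concavity of each `Rthru` on the feasible set -/
lemma Rthru_concave (hγ : ∀ i, 0 < γ i) (i : Fin K) {a b : Fin (K+1) → ℝ}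
    (ha : a ∈ Dfeas K) (hb : b ∈ Dfeas K) {s t : ℝ} (hs : 0 ≤ s) (ht : 0 ≤ t)
    (hst : s + t = 1) :
    s * Rthru γ i a + t * Rthru γ i b ≤ Rthru γ i (s • a + t • b) := by
  have hy1 : 0 ≤ a i.succ := ha.1 _
  have hy2 : 0 ≤ b i.succ := hb.1 _
  have hx1 : 0 ≤ a 0 := ha.1 0
  have hx2 : 0 ≤ b 0 := hb.1 0
  have hcoord : (s • a + t • b) i.succ = s * a i.succ + t * b i.succ := by
    simp [smul_eq_mul]
  have hcoord0 : (s • a + t • b) 0 = s * a 0 + t * b 0 := by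
    simp [smul_eq_mul]
  have term_zero : ∀ (s' : ℝ) (c : Fin (K+1) → ℝ), s' * c i.succ = 0 →
      s' * Rthru γ i c = 0 := by
    intro s' c hc
    rcases mul_eq_zero.1 hc with h | h
    · rw [h, zero_mul]
    · have : Rthru γ i c = 0 := if_neg (by rw [h]; exact lt_irrefl 0)
      rw [this, mul_zero]
  by_cases hy : 0 < s * a i.succ + t * b i.succ
  · rw [show Rthru γ i (s • a + t • b) =
        (s * a i.succ + t * b i.succ) *
          Real.logb 2 (1 + γ i * (s * a 0 + t * b 0) / (s * a i.succ + t * b i.succ)) by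
      unfold Rthru; rw [hcoord, hcoord0, if_pos hy]]
    by_cases hu : 0 < s * a i.succ
    · have hs' : 0 < s := by
        rcases lt_or_eq_of_le hs with h | h
        · exact h
        · exfalso; rw [← h, zero_mul] at hu; exact lt_irrefl 0 hu
      have hy1' : 0 < a i.succ := by
        rcases lt_or_eq_of_le hy1 with h | h
        · exact h
        · exfalso; rw [← h, mul_zero] at hu; exact lt_irrefl 0 hu
      by_cases hv : 0 < t * b i.succ
      · have ht' : 0 < t := by
          rcases lt_or_eq_of_le ht with h | h
          · exact h
          · exfalso; rw [← h, zero_mul] at hv; exact lt_irrefl 0 hv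
        have hy2' : 0 < b i.succ := by
          rcases lt_or_eq_of_le hy2 with h | h
          · exact h
          · exfalso; rw [← h, mul_zero] at hv; exact lt_irrefl 0 hv
        rw [show Rthru γ i a = a i.succ * Real.logb 2 (1 + γ i * a 0 / a i.succ) from
          if_pos hy1', show Rthru γ i b = b i.succ * Real.logb 2 (1 + γ i * b 0 / b i.succ)
          from if_pos hy2', ← mul_assoc, ← mul_assoc]
        exact logb_core (hγ i) hx1 hx2 hy1' hy2' hs' ht'
      · -- second term inactive
        have hveq : t * b i.succ = 0 := le_antisymm (not_lt.1 hv) (mul_nonneg ht hy2)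
        rw [term_zero t b hveq, add_zero, hveq, add_zero]
        rw [show Rthru γ i a = a i.succ * Real.logb 2 (1 + γ i * a 0 / a i.succ) from
          if_pos hy1', ← mul_assoc]
        have harg1 : (0:ℝ) < 1 + γ i * a 0 / a i.succ := by
          have := div_nonneg (mul_nonneg (hγ i).le hx1) hy1'.le; linarith
        have hmono : Real.logb 2 (1 + γ i * a 0 / a i.succ) ≤
            Real.logb 2 (1 + γ i * (s * a 0 + t * b 0) / (s * a i.succ)) := by
          apply Real.logb_le_logb_of_le one_lt_two harg1
          have : γ i * a 0 / a i.succ ≤ γ i * (s * a 0 + t * b 0) / (s * a i.succ) := by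
            rw [div_le_div_iff₀ hy1' hu]
            have h1 : γ i * a 0 * (s * a i.succ) = γ i * (s * a 0) * a i.succ := by ring
            rw [h1]
            have h2 : 0 ≤ γ i * (t * b 0) * a i.succ :=
              mul_nonneg (mul_nonneg (hγ i).le (mul_nonneg ht hx2)) hy1
            nlinarith
          linarith
        exact mul_le_mul_of_nonneg_left hmono hu.le
    · -- first term inactive
      have hueq : s * a i.succ = 0 := le_antisymm (not_lt.1 hu) (mul_nonneg hs hy1)
      have hv : 0 < t * b i.succ := by rw [hueq, zero_add] at hy; exact hy
      have ht' : 0 < t := by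
        rcases lt_or_eq_of_le ht with h | h
        · exact h
        · exfalso; rw [← h, zero_mul] at hv; exact lt_irrefl 0 hv
      have hy2' : 0 < b i.succ := by
        rcases lt_or_eq_of_le hy2 with h | h
        · exact h
        · exfalso; rw [← h, mul_zero] at hv; exact lt_irrefl 0 hv
      rw [term_zero s a hueq, zero_add, hueq, zero_add]
      rw [show Rthru γ i b = b i.succ * Real.logb 2 (1 + γ i * b 0 / b i.succ) from
        if_pos hy2', ← mul_assoc]
      have harg1 : (0:ℝ) < 1 + γ i * b 0 / b i.succ := by
        have := div_nonneg (mul_nonneg (hγ i).le hx2) hy2'.le; linarith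
      have hmono : Real.logb 2 (1 + γ i * b 0 / b i.succ) ≤
          Real.logb 2 (1 + γ i * (s * a 0 + t * b 0) / (t * b i.succ)) := by
        apply Real.logb_le_logb_of_le one_lt_two harg1
        have : γ i * b 0 / b i.succ ≤ γ i * (s * a 0 + t * b 0) / (t * b i.succ) := by
          rw [div_le_div_iff₀ hy2' hv]
          have h1 : γ i * b 0 * (t * b i.succ) = γ i * (t * b 0) * b i.succ := by ring
          rw [h1]
          have h2 : 0 ≤ γ i * (s * a 0) * b i.succ :=
            mul_nonneg (mul_nonneg (hγ i).le (mul_nonneg hs hx1)) hy2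
          nlinarith
        linarith
      exact mul_le_mul_of_nonneg_left hmono hv.le
  · -- combined coordinate is zero
    have h1 : s * a i.succ = 0 ∧ t * b i.succ = 0 := by
      constructor <;> nlinarith [mul_nonneg hs hy1, mul_nonneg ht hy2]
    rw [term_zero s a h1.1, term_zero t b h1.2, add_zero]
    rw [show Rthru γ i (s • a + t • b) = 0 from if_neg (by rw [hcoord]; exact hy)]

end aux

/-- For `R̄ > 0`: there is no feasible `τ` with `R_i(τ) ≥ R̄` for all `i` iff there
exist nonnegative multipliers `λ` such that `inf_{τ ∈ D} −Σ λ_i (R_i(τ) − R̄) > 0`,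
i.e. there is `c > 0` with `Σ λ_i (R_i(τ) − R̄) ≤ −c` for all `τ ∈ D`. -/
theorem stmt12 (K : ℕ) (hK : 1 ≤ K) (γ : Fin K → ℝ) (hγ : ∀ i, 0 < γ i)
    (Rbar : ℝ) (hRbar : 0 < Rbar) :
    (¬ ∃ τ ∈ Dfeas K, ∀ i : Fin K, Rbar ≤ Rthru γ i τ) ↔
    (∃ lam : Fin K → ℝ, (∀ i, 0 ≤ lam i) ∧
      ∃ c : ℝ, 0 < c ∧ ∀ τ ∈ Dfeas K, ∑ i, lam i * (Rthru γ i τ - Rbar) ≤ -c) := by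
  constructor
  · intro hno
    haveI : Nonempty (Fin K) := ⟨⟨0, hK⟩⟩
    have hne : (Dfeas K).Nonempty := ⟨0, zero_mem_Dfeas⟩
    have hcont : ContinuousOn
        (fun τ => Finset.univ.inf' Finset.univ_nonempty (fun i => Rthru γ i τ)) (Dfeas K) :=
      ContinuousOn.finset_inf'_apply Finset.univ_nonempty (fun i _ => Rthru_continuousOn hγ i)
    obtain ⟨τs, hτs, hmax⟩ := isCompact_Dfeas.exists_isMaxOn hne hcont
    set sstar := Finset.univ.inf' Finset.univ_nonempty (fun i => Rthru γ i τs) with hsdef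
    have hs_lt : sstar < Rbar := by
      by_contra hcon
      push_neg at hcon
      exact hno ⟨τs, hτs, fun i => le_trans hcon (Finset.inf'_le _ (Finset.mem_univ i))⟩
    have hs_nonneg : 0 ≤ sstar := by
      have h0 : (Finset.univ.inf' Finset.univ_nonempty
          (fun i => Rthru γ i (0 : Fin (K+1) → ℝ))) ≤ sstar := hmax zero_mem_Dfeas
      have hz : Finset.univ.inf' Finset.univ_nonempty
          (fun i => Rthru γ i (0 : Fin (K+1) → ℝ)) = 0 := by
        simp [Rthru_zero]
      rw [hz] at h0
      exact h0
    have hbound : ∀ τ ∈ Dfeas K, ∃ i, Rthru γ i τ ≤ sstar := by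
      intro τ hτ
      obtain ⟨i, _, hi⟩ := Finset.exists_mem_eq_inf' (Finset.univ_nonempty (α := Fin K))
        (fun i => Rthru γ i τ)
      have h2 : (Finset.univ.inf' Finset.univ_nonempty (fun i => Rthru γ i τ)) ≤ sstar :=
        hmax hτ
      exact ⟨i, hi ▸ h2⟩
    set c := (sstar + Rbar) / 2 with hcdef
    have hc1 : sstar < c := by rw [hcdef]; linarith
    have hc2 : c < Rbar := by rw [hcdef]; linarith
    have hc_pos : 0 < c := by rw [hcdef]; linarith
    set A : Set (Fin K → ℝ) := {r | ∃ τ ∈ Dfeas K, ∀ i, r i ≤ Rthru γ i τ} with hAdef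
    have hAconv : Convex ℝ A := by
      rintro r1 ⟨τ1, hτ1, hr1⟩ r2 ⟨τ2, hτ2, hr2⟩ s t hs ht hst
      refine ⟨s • τ1 + t • τ2, convex_Dfeas hτ1 hτ2 hs ht hst, fun i => ?_⟩
      calc (s • r1 + t • r2) i = s * r1 i + t * r2 i := by simp [smul_eq_mul]
        _ ≤ s * Rthru γ i τ1 + t * Rthru γ i τ2 :=
            add_le_add (mul_le_mul_of_nonneg_left (hr1 i) hs)
              (mul_le_mul_of_nonneg_left (hr2 i) ht)
        _ ≤ Rthru γ i (s • τ1 + t • τ2) := Rthru_concave hγ i hτ1 hτ2 hs ht hst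
    have h0A : (0 : Fin K → ℝ) ∈ A :=
      ⟨0, zero_mem_Dfeas, fun i => by rw [Rthru_zero]; exact le_refl 0⟩
    have hCclosed : IsClosed (⋃ i, {q : Fin K → ℝ | q i ≤ sstar}) :=
      isClosed_iUnion_of_finite fun i => isClosed_le (continuous_apply i) continuous_const
    have hAsub : A ⊆ ⋃ i, {q : Fin K → ℝ | q i ≤ sstar} := by
      rintro r ⟨τ, hτ, hr⟩
      obtain ⟨i, hi⟩ := hbound τ hτ
      exact Set.mem_iUnion.2 ⟨i, le_trans (hr i) hi⟩
    have hp : (fun _ : Fin K => c) ∉ closure A := by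
      intro hmem
      have hmem2 := closure_minimal hAsub hCclosed hmem
      obtain ⟨i, hi⟩ := Set.mem_iUnion.1 hmem2
      have : c ≤ sstar := hi
      linarith
    obtain ⟨f, u, hfa, hfp⟩ :=
      geometric_hahn_banach_closed_point hAconv.closure isClosed_closure hp
    have hu_pos : 0 < u := by
      have h := hfa 0 (subset_closure h0A)
      rw [map_zero] at h
      exact h
    set lam : Fin K → ℝ := fun i => f (fun j => if i = j then 1 else 0) with hlamdef
    have hfr : ∀ r : Fin K → ℝ, f r = ∑ i, r i * lam i := by
      intro r
      conv_lhs => rw [pi_eq_sum_univ r]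
      rw [map_sum]
      refine Finset.sum_congr rfl fun i _ => ?_
      rw [map_smul, smul_eq_mul]
    have hlam_nonneg : ∀ i, 0 ≤ lam i := by
      intro i
      by_contra hneg
      push_neg at hneg
      set M := u / (-lam i) with hMdef
      have hM : 0 < M := div_pos hu_pos (neg_pos.2 hneg)
      have hmem : ((-M) • fun j => if i = j then (1:ℝ) else 0) ∈ A := by
        refine ⟨0, zero_mem_Dfeas, fun j => ?_⟩
        rw [Rthru_zero]
        simp only [Pi.smul_apply, smul_eq_mul]
        split_ifs
        · linarith
        · simp
      have hlt := hfa _ (subset_closure hmem)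
      rw [map_smul, smul_eq_mul] at hlt
      have heq : -M * lam i = u := by
        rw [hMdef]
        have hne : lam i ≠ 0 := ne_of_lt hneg
        field_simp
      linarith
    have hfp' : f (fun _ => c) = c * ∑ i, lam i := by
      rw [hfr, ← Finset.mul_sum]
    have hucS : u < c * ∑ i, lam i := by rw [← hfp']; exact hfp
    have hsum_pos : 0 < ∑ i, lam i := by
      have h1 : 0 < c * ∑ i, lam i := lt_trans hu_pos hucS
      by_contra hcon
      push_neg at hcon
      nlinarith
    refine ⟨lam, hlam_nonneg, (Rbar - c) * ∑ i, lam i, by nlinarith, ?_⟩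
    intro τ hτ
    have hmemA : (fun i => Rthru γ i τ) ∈ A := ⟨τ, hτ, fun i => le_refl _⟩
    have hfR := hfa _ (subset_closure hmemA)
    rw [hfr] at hfR
    have hexp : ∑ i, lam i * (Rthru γ i τ - Rbar)
        = (∑ i, Rthru γ i τ * lam i) - Rbar * ∑ i, lam i := by
      rw [Finset.mul_sum, ← Finset.sum_sub_distrib]
      exact Finset.sum_congr rfl fun i _ => by ring
    rw [hexp]
    nlinarith
  · rintro ⟨lam, hlam, c, hc, hbound⟩ ⟨τ, hτ, hR⟩
    have h1 := hbound τ hτ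
    have h2 : (0:ℝ) ≤ ∑ i, lam i * (Rthru γ i τ - Rbar) :=
      Finset.sum_nonneg fun i _ => mul_nonneg (hlam i) (by linarith [hR i])
    linarith
end

section
/- Let λ_1, ..., λ_K > 0. Suppose μ > 0 and z_1, ..., z_K > 0 satisfy ln(1 + z_i) − z_i/(1 + z_i) = (μ/λ_i) · ln 2 for each i = 1,...,K, and Σ_{i=1}^K λ_i γ_i/(1 + z_i) = μ · ln 2. Define τ* ∈ ℝ^{K+1} by τ_0* = 1/(1 + Σ_{j=1}^K γ_j/z_j) and τ_i* = (γ_i/z_i)/(1 + Σ_{j=1}^K γ_j/z_j) for i = 1,...,K. Then τ* ∈ D and for every τ ∈ D one has Σ_{i=1}^K λ_i R_i(τ) ≤ Σ_{i=1}^K λ_i R_i(τ*); i.e., τ* maximizes the weighted sum-throughput over D. -/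
open Real

lemma key_ineq (g zz t0 ti : ℝ) (hg : 0 < g) (hzz : 0 < zz) (ht0 : 0 ≤ t0) (hti : 0 ≤ ti) :
    (if 0 < ti then ti * Real.log (1 + g * t0 / ti) else 0) ≤
      g * t0 / (1 + zz) + (Real.log (1 + zz) - zz / (1 + zz)) * ti := by
  have h1z : 0 < 1 + zz := by linarith
  by_cases h : 0 < ti
  · rw [if_pos h]
    set u := g * t0 / ti with hu
    have hu0 : 0 ≤ u := by positivity
    have h1u : 0 < 1 + u := by linarith
    have hlog : Real.log (1 + u) - Real.log (1 + zz) ≤ (u - zz) / (1 + zz) := by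
      have h2 := Real.log_le_sub_one_of_pos (show 0 < (1 + u) / (1 + zz) by positivity)
      rw [Real.log_div (by linarith) (by linarith)] at h2
      have h3 : (1 + u) / (1 + zz) - 1 = (u - zz) / (1 + zz) := by field_simp; ring
      linarith [h2, h3.le]
    have hut : ti * u = g * t0 := by
      rw [hu]; field_simp [h.ne']
    have h4 : ti * ((u - zz) / (1 + zz)) = g * t0 / (1 + zz) - zz / (1 + zz) * ti := by
      rw [mul_div_assoc', mul_sub, hut]
      ring
    nlinarith [mul_le_mul_of_nonneg_left hlog h.le, h4]
  · rw [if_neg h]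
    have hti0 : ti = 0 := le_antisymm (not_lt.mp h) hti
    rw [hti0]
    have : 0 ≤ g * t0 / (1 + zz) := by positivity
    linarith

/-- If `μ > 0` and `z_1,…,z_K > 0` satisfy the KKT system
`ln(1+z_i) − z_i/(1+z_i) = (μ/λ_i) ln 2` and `Σ λ_i γ_i/(1+z_i) = μ ln 2`, then the
allocation `τ_0* = 1/(1 + Σ γ_j/z_j)`, `τ_i* = (γ_i/z_i)/(1 + Σ γ_j/z_j)` is feasible
and maximizes the weighted sum-throughput `Σ λ_i R_i(τ)` over `D`. -/
theorem stmt13 (K : ℕ) (hK : 1 ≤ K) (γ : Fin K → ℝ) (hγ : ∀ i, 0 < γ i)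
    (lam : Fin K → ℝ) (hlam : ∀ i, 0 < lam i)
    (μ : ℝ) (hμ : 0 < μ) (z : Fin K → ℝ) (hz : ∀ i, 0 < z i)
    (heq1 : ∀ i, Real.log (1 + z i) - z i / (1 + z i) = (μ / lam i) * Real.log 2)
    (heq2 : ∑ i, lam i * γ i / (1 + z i) = μ * Real.log 2)
    (τs : Fin (K + 1) → ℝ)
    (hτ0 : τs 0 = 1 / (1 + ∑ j, γ j / z j))
    (hτi : ∀ i : Fin K, τs i.succ = (γ i / z i) / (1 + ∑ j, γ j / z j)) :
    τs ∈ Dfeas K ∧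
    ∀ τ ∈ Dfeas K, ∑ i, lam i * Rthru γ i τ ≤ ∑ i, lam i * Rthru γ i τs := by
  have hln2 : (0:ℝ) < Real.log 2 := Real.log_pos (by norm_num)
  have hSsum : (0:ℝ) ≤ ∑ j, γ j / z j :=
    Finset.sum_nonneg fun j _ => le_of_lt (div_pos (hγ j) (hz j))
  have hS : (0:ℝ) < 1 + ∑ j, γ j / z j := by linarith
  have hSne : (1:ℝ) + ∑ j, γ j / z j ≠ 0 := ne_of_gt hS
  -- nonnegativity of τs
  have hln2ne : Real.log 2 ≠ 0 := ne_of_gt hln2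
  have hτnn : ∀ j, 0 ≤ τs j := by
    intro j
    refine Fin.cases ?_ ?_ j
    · rw [hτ0]; exact (one_div_pos.mpr hS).le
    · intro i; rw [hτi i]; exact (div_pos (div_pos (hγ i) (hz i)) hS).le
  -- τs sums to 1
  have hτsum : ∑ j, τs j = 1 := by
    rw [Fin.sum_univ_succ, hτ0]
    have h1 : ∑ i : Fin K, τs i.succ = (∑ i, γ i / z i) / (1 + ∑ j, γ j / z j) := by
      rw [Finset.sum_div]
      exact Finset.sum_congr rfl fun i _ => hτi i
    rw [h1]
    field_simp
  refine ⟨⟨hτnn, le_of_eq hτsum⟩, ?_⟩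
  -- value at τs is μ
  have hval : ∑ i, lam i * Rthru γ i τs = μ := by
    have hterm : ∀ i, lam i * Rthru γ i τs =
        μ * τs i.succ + lam i * γ i / (1 + z i) / ((1 + ∑ j, γ j / z j) * Real.log 2) := by
      intro i
      have h1z : (1:ℝ) + z i ≠ 0 := by nlinarith [hz i]
      have hzne : z i ≠ 0 := ne_of_gt (hz i)
      have hγne : γ i ≠ 0 := ne_of_gt (hγ i)
      have hlamne : lam i ≠ 0 := ne_of_gt (hlam i)
      have hpos : 0 < τs i.succ := by
        rw [hτi i]; exact div_pos (div_pos (hγ i) (hz i)) hS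
      have harg : γ i * τs 0 / τs i.succ = z i := by
        rw [hτ0, hτi i]
        field_simp
      have hR : Rthru γ i τs = τs i.succ * Real.logb 2 (1 + z i) := by
        unfold Rthru
        rw [if_pos hpos, harg]
      rw [hR, Real.logb, hτi i]
      have hlz : Real.log (1 + z i) = (μ / lam i) * Real.log 2 + z i / (1 + z i) := by
        linarith [heq1 i]
      rw [hlz]
      field_simp
    rw [Finset.sum_congr rfl fun i _ => hterm i]
    rw [Finset.sum_add_distrib, ← Finset.mul_sum, ← Finset.sum_div, heq2]
    have hsucc : ∑ i : Fin K, τs i.succ = 1 - τs 0 := by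
      have := hτsum
      rw [Fin.sum_univ_succ] at this
      linarith
    rw [hsucc, hτ0]
    field_simp
    ring
  rw [hval]
  -- upper bound: any feasible τ yields at most μ
  rintro τ ⟨hnn, hsum⟩
  have hbound : ∀ i, lam i * Rthru γ i τ ≤
      lam i * γ i / (1 + z i) * τ 0 / Real.log 2 + μ * τ i.succ := by
    intro i
    have hk := key_ineq (γ i) (z i) (τ 0) (τ i.succ) (hγ i) (hz i) (hnn 0) (hnn i.succ)
    rw [heq1 i] at hk
    have hR : Rthru γ i τ =
        (if 0 < τ i.succ then τ i.succ * Real.log (1 + γ i * τ 0 / τ i.succ) else 0) / Real.log 2 := by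
      unfold Rthru Real.logb
      split_ifs with h
      · ring
      · simp
    rw [hR]
    have hstep : (if 0 < τ i.succ then τ i.succ * Real.log (1 + γ i * τ 0 / τ i.succ) else 0) / Real.log 2
        ≤ (γ i * τ 0 / (1 + z i) + μ / lam i * Real.log 2 * τ i.succ) / Real.log 2 := by
      gcongr
    have h2 := mul_le_mul_of_nonneg_left hstep (hlam i).le
    have heqr : lam i * ((γ i * τ 0 / (1 + z i) + μ / lam i * Real.log 2 * τ i.succ) / Real.log 2)
        = lam i * γ i / (1 + z i) * τ 0 / Real.log 2 + μ * τ i.succ := by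
      have h1z : (1:ℝ) + z i ≠ 0 := by nlinarith [hz i]
      have hlamne : lam i ≠ 0 := ne_of_gt (hlam i)
      field_simp
    linarith [h2, heqr.le, heqr.ge]
  calc ∑ i, lam i * Rthru γ i τ
      ≤ ∑ i, (lam i * γ i / (1 + z i) * τ 0 / Real.log 2 + μ * τ i.succ) :=
        Finset.sum_le_sum fun i _ => hbound i
    _ = (∑ i, lam i * γ i / (1 + z i)) * τ 0 / Real.log 2 + μ * ∑ i : Fin K, τ i.succ := by
        rw [Finset.sum_add_distrib, ← Finset.mul_sum, ← Finset.sum_div, ← Finset.sum_mul]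
    _ = μ * τ 0 + μ * ∑ i : Fin K, τ i.succ := by
        rw [heq2]
        field_simp
    _ = μ * ∑ j, τ j := by rw [Fin.sum_univ_succ]; ring
    _ ≤ μ * 1 := mul_le_mul_of_nonneg_left hsum hμ.le
    _ = μ := mul_one μ
end

section
/- Let K ≥ 1, γ_1,...,γ_K > 0 and λ_1,...,λ_K > 0. Then there exist unique μ > 0 and z_1,...,z_K > 0 satisfying the system ln(1 + z_i) − z_i/(1 + z_i) = (μ/λ_i) · ln 2 for each i = 1,...,K, together with Σ_{i=1}^K λ_i γ_i/(1 + z_i) = μ · ln 2. -/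
open Real Set

noncomputable def f14 (z : ℝ) : ℝ := Real.log (1+z) - z/(1+z)

lemma f14_deriv {z : ℝ} (hz : 0 < 1 + z) : HasDerivAt f14 (z/(1+z)^2) z := by
  have h1 : HasDerivAt (fun z : ℝ => 1 + z) 1 z := by
    simpa using (hasDerivAt_id z).const_add 1
  have hlog : HasDerivAt (fun z : ℝ => Real.log (1+z)) (1/(1+z)) z :=
    h1.log hz.ne'
  have hdiv : HasDerivAt (fun z : ℝ => z/(1+z)) ((1*(1+z) - z*1)/(1+z)^2) z :=
    (hasDerivAt_id z).div h1 hz.ne'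
  have := hlog.sub hdiv
  have heq : z/(1+z)^2 = 1/(1+z) - (1*(1+z) - z*1)/(1+z)^2 := by
    have hz1 : 1 + z ≠ 0 := hz.ne'
    field_simp
    ring
  rw [heq]
  exact this

lemma f14_mono : StrictMonoOn f14 (Set.Ici 0) := by
  apply strictMonoOn_of_deriv_pos (convex_Ici 0)
  · intro x hx
    have hx' : (0:ℝ) < 1 + x := by
      simp only [mem_Ici] at hx; linarith
    exact (f14_deriv hx').continuousAt.continuousWithinAt
  · intro x hx
    rw [interior_Ici] at hx
    have hx0 : (0:ℝ) < x := hx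
    have hx' : (0:ℝ) < 1 + x := by linarith
    rw [(f14_deriv hx').deriv]
    positivity

lemma f14_zero : f14 0 = 0 := by simp [f14]

lemma f14_pos {z : ℝ} (hz : 0 < z) : 0 < f14 z := by
  have := f14_mono (self_mem_Ici) (Set.mem_Ici.2 (le_of_lt hz)) hz
  rwa [f14_zero] at this

lemma f14_le {z : ℝ} (hz : 0 ≤ z) : Real.log (1+z) - 1 ≤ f14 z := by
  have h1 : 0 < 1 + z := by linarith
  have : z/(1+z) ≤ 1 := by
    rw [div_le_one h1]; linarith
  simp only [f14]; linarith

lemma f14_surj {y : ℝ} (hy : 0 < y) : ∃ z, 0 < z ∧ f14 z = y := by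
  set M : ℝ := Real.exp (y+1) - 1 with hM
  have hM0 : 0 ≤ M := by
    have h1 : (1:ℝ) ≤ Real.exp (y+1) := by
      exact Real.one_le_exp (by linarith)
    simp only [hM]; linarith
  have hcont : ContinuousOn f14 (Icc 0 M) := by
    intro x hx
    have hx' : (0:ℝ) < 1 + x := by
      have := hx.1; linarith
    exact (f14_deriv hx').continuousAt.continuousWithinAt
  have hfM : y ≤ f14 M := by
    have := f14_le hM0
    have h1 : Real.log (1 + M) = y + 1 := by
      have hEq : 1 + M = Real.exp (y+1) := by rw [hM]; ring
      rw [hEq, Real.log_exp]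
    linarith
  have : y ∈ Icc (f14 0) (f14 M) := by
    rw [f14_zero]; exact ⟨le_of_lt hy, hfM⟩
  obtain ⟨z, hz, hfz⟩ := intermediate_value_Icc hM0 hcont this
  refine ⟨z, ?_, hfz⟩
  rcases eq_or_lt_of_le hz.1 with h | h
  · exfalso; rw [← h, f14_zero] at hfz; linarith
  · exact h

noncomputable def E14 : Set.Ioi (0:ℝ) ≃o Set.Ioi (0:ℝ) :=
  StrictMono.orderIsoOfSurjective
    (fun z => ⟨f14 z.val, f14_pos z.2⟩)
    (fun a b hab => f14_mono (Set.mem_Ici.2 (le_of_lt a.2)) (Set.mem_Ici.2 (le_of_lt b.2)) hab)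
    (fun y => by
      obtain ⟨z, hz, hfz⟩ := f14_surj y.2
      exact ⟨⟨z, hz⟩, Subtype.ext hfz⟩)

noncomputable def finv14 (y : ℝ) : ℝ :=
  if h : 0 < y then (E14.symm ⟨y, h⟩ : ℝ) else 0

lemma finv14_pos {y : ℝ} (hy : 0 < y) : 0 < finv14 y := by
  rw [finv14, dif_pos hy]; exact (E14.symm ⟨y, hy⟩).2

lemma f14_finv14 {y : ℝ} (hy : 0 < y) : f14 (finv14 y) = y := by
  rw [finv14, dif_pos hy]
  have := E14.apply_symm_apply ⟨y, hy⟩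
  change (E14 (E14.symm ⟨y, hy⟩) : ℝ) = y
  exact congrArg Subtype.val this

lemma finv14_eq {y z : ℝ} (hy : 0 < y) (hz : 0 < z) (h : f14 z = y) :
    z = finv14 y := by
  have h1 : f14 (finv14 y) = y := f14_finv14 hy
  have h2 : 0 < finv14 y := finv14_pos hy
  exact f14_mono.injOn (le_of_lt hz) (le_of_lt h2) (by rw [h, h1])

lemma finv14_strictMono : StrictMonoOn finv14 (Set.Ioi 0) := by
  intro a ha b hb hab
  have ha' : 0 < a := ha
  have hb' : 0 < b := hb
  have := f14_finv14 ha'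
  have := f14_finv14 hb'
  rw [← f14_mono.lt_iff_lt (le_of_lt (finv14_pos ha')) (le_of_lt (finv14_pos hb'))]
  rw [f14_finv14 ha', f14_finv14 hb']
  exact hab

lemma finv14_cont : ContinuousOn finv14 (Set.Ioi 0) := by
  rw [continuousOn_iff_continuous_restrict]
  have : (Set.Ioi (0:ℝ)).domRestrict finv14 = fun y => (E14.symm y : ℝ) := by
    funext y
    simp only [Set.domRestrict_apply, finv14, Subtype.coe_eta]
    exact dif_pos y.2
  rw [this]
  exact continuous_subtype_val.comp E14.symm.continuous

lemma finv14_bound {y : ℝ} (hy : 0 < y) : 1 + finv14 y ≤ Real.exp (y+1) := by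
  have h1 := f14_le (le_of_lt (finv14_pos hy))
  rw [f14_finv14 hy] at h1
  have h2 : Real.log (1 + finv14 y) ≤ y + 1 := by linarith
  have h3 : 0 < 1 + finv14 y := by have := finv14_pos hy; linarith
  calc 1 + finv14 y = Real.exp (Real.log (1 + finv14 y)) := (Real.exp_log h3).symm
    _ ≤ Real.exp (y+1) := Real.exp_le_exp.2 h2

/-- For positive `γ_i` and `λ_i` there exist unique `μ > 0` and `z_1,…,z_K > 0`
satisfying `ln(1+z_i) − z_i/(1+z_i) = (μ/λ_i) ln 2` for each `i` together with
`Σ λ_i γ_i/(1+z_i) = μ ln 2`. -/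
theorem stmt14 (K : ℕ) (hK : 1 ≤ K) (γ : Fin K → ℝ) (hγ : ∀ i, 0 < γ i)
    (lam : Fin K → ℝ) (hlam : ∀ i, 0 < lam i) :
    ∃! p : ℝ × (Fin K → ℝ),
      0 < p.1 ∧ (∀ i, 0 < p.2 i) ∧
      (∀ i, Real.log (1 + p.2 i) - p.2 i / (1 + p.2 i) = (p.1 / lam i) * Real.log 2) ∧
      ∑ i, lam i * γ i / (1 + p.2 i) = p.1 * Real.log 2 := by
  have hne : Nonempty (Fin K) := Fin.pos_iff_nonempty.1 hK
  have hune : (Finset.univ : Finset (Fin K)).Nonempty := Finset.univ_nonempty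
  set c : ℝ := Real.log 2 with hcdef
  have hc : 0 < c := Real.log_pos one_lt_two
  set F : ℝ → ℝ := fun μ => (∑ i, lam i * γ i / (1 + finv14 (μ*c/lam i))) - μ*c with hF
  have harg : ∀ {μ : ℝ}, 0 < μ → ∀ i : Fin K, 0 < μ*c/lam i := fun hμ i =>
    div_pos (mul_pos hμ hc) (hlam i)
  -- continuity
  have hcont : ContinuousOn F (Set.Ioi 0) := by
    apply ContinuousOn.sub
    · apply continuousOn_finset_sum
      intro i _
      apply ContinuousOn.div continuousOn_const
      · apply ContinuousOn.add continuousOn_const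
        apply finv14_cont.comp
        · exact ((continuous_id.mul continuous_const).div_const _).continuousOn
        · intro μ hμ
          exact harg hμ i
      · intro μ hμ
        have := finv14_pos (harg hμ i)
        positivity
    · exact (continuous_id.mul continuous_const).continuousOn
  -- strict anti
  have hanti : StrictAntiOn F (Set.Ioi 0) := by
    intro a ha b hb hab
    have hsum : ∑ i, lam i * γ i / (1 + finv14 (b*c/lam i))
        < ∑ i, lam i * γ i / (1 + finv14 (a*c/lam i)) := by
      apply Finset.sum_lt_sum_of_nonempty hune
      intro i _
      have h1 : finv14 (a*c/lam i) < finv14 (b*c/lam i) := by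
        apply finv14_strictMono (harg ha i) (harg hb i)
        exact div_lt_div_of_pos_right (mul_lt_mul_of_pos_right hab hc) (hlam i)
      have h2 : 0 < 1 + finv14 (a*c/lam i) := by
        have := finv14_pos (harg ha i); linarith
      apply div_lt_div_of_pos_left (mul_pos (hlam i) (hγ i)) h2
      linarith
    have : a*c < b*c := mul_lt_mul_of_pos_right hab hc
    simp only [hF]
    linarith
  -- choose endpoints
  set S : ℝ := ∑ i, lam i * γ i with hSdef
  have hS : 0 < S := Finset.sum_pos (fun i _ => mul_pos (hlam i) (hγ i)) hune
  obtain ⟨i₀, -, hmin⟩ := Finset.exists_min_image Finset.univ lam hune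
  set m : ℝ := lam i₀ with hmdef
  have hm : 0 < m := hlam i₀
  have hmle : ∀ i, m ≤ lam i := fun i => hmin i (Finset.mem_univ i)
  set a : ℝ := min (m/c) (S/(Real.exp 2 * c)) / 2 with hadef
  have hexp2 : (0:ℝ) < Real.exp 2 := Real.exp_pos 2
  have ha : 0 < a := by
    apply div_pos _ two_pos
    exact lt_min (div_pos hm hc) (div_pos hS (mul_pos hexp2 hc))
  have hac_m : a * c ≤ m := by
    have h1 : a ≤ m/c := by
      have := min_le_left (m/c) (S/(Real.exp 2 * c))
      rw [hadef]; linarith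
    calc a * c ≤ (m/c) * c := mul_le_mul_of_nonneg_right h1 (le_of_lt hc)
      _ = m := by field_simp
  have hac_S : a * c < S / Real.exp 2 := by
    have h1 : a ≤ (S/(Real.exp 2 * c)) / 2 := by
      have := min_le_right (m/c) (S/(Real.exp 2 * c))
      rw [hadef]; linarith
    have h2 : a * c ≤ S / Real.exp 2 / 2 := by
      calc a * c ≤ (S/(Real.exp 2 * c) / 2) * c := mul_le_mul_of_nonneg_right h1 (le_of_lt hc)
        _ = S / Real.exp 2 / 2 := by field_simp
    have h3 : 0 < S / Real.exp 2 := div_pos hS hexp2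
    linarith
  have hFa : 0 < F a := by
    have hterm : ∀ i : Fin K, lam i * γ i / Real.exp 2 ≤ lam i * γ i / (1 + finv14 (a*c/lam i)) := by
      intro i
      have hden : 1 + finv14 (a*c/lam i) ≤ Real.exp 2 := by
        calc 1 + finv14 (a*c/lam i) ≤ Real.exp (a*c/lam i + 1) := finv14_bound (harg ha i)
          _ ≤ Real.exp 2 := by
            apply Real.exp_le_exp.2
            have : a*c/lam i ≤ 1 := by
              rw [div_le_one (hlam i)]
              exact le_trans hac_m (hmle i)
            linarith
      have hd : 0 < 1 + finv14 (a*c/lam i) := by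
        have := finv14_pos (harg ha i); linarith
      exact div_le_div_of_nonneg_left (le_of_lt (mul_pos (hlam i) (hγ i))) hd hden
    have hsum : S / Real.exp 2 ≤ ∑ i, lam i * γ i / (1 + finv14 (a*c/lam i)) := by
      rw [hSdef, Finset.sum_div]
      exact Finset.sum_le_sum fun i _ => hterm i
    simp only [hF]
    linarith
  set b : ℝ := max (a+1) (S/c + 1) with hbdef
  have hab : a < b := lt_of_lt_of_le (by linarith) (le_max_left _ _)
  have hb : 0 < b := lt_trans ha hab
  have hFb : F b < 0 := by
    have hsum : ∑ i, lam i * γ i / (1 + finv14 (b*c/lam i)) < S := by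
      rw [hSdef]
      apply Finset.sum_lt_sum_of_nonempty hune
      intro i _
      apply div_lt_self (mul_pos (hlam i) (hγ i))
      have := finv14_pos (harg hb i); linarith
    have hbc : S < b * c := by
      have h1 : S/c + 1 ≤ b := le_max_right _ _
      have : (S/c + 1) * c ≤ b * c := mul_le_mul_of_nonneg_right h1 (le_of_lt hc)
      have h2 : (S/c + 1) * c = S + c := by field_simp
      linarith
    simp only [hF]
    linarith
  -- root via IVT
  have hsub : Set.Icc a b ⊆ Set.Ioi 0 := fun x hx => lt_of_lt_of_le ha hx.1
  obtain ⟨μ, hμab, hFμ⟩ := intermediate_value_Icc' (le_of_lt hab) (hcont.mono hsub)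
    ⟨le_of_lt hFb, le_of_lt hFa⟩
  have hμ : 0 < μ := lt_of_lt_of_le ha hμab.1
  refine ⟨(μ, fun i => finv14 (μ*c/lam i)), ⟨hμ, fun i => finv14_pos (harg hμ i), ?_, ?_⟩, ?_⟩
  · intro i
    have h1 : f14 (finv14 (μ*c/lam i)) = μ*c/lam i := f14_finv14 (harg hμ i)
    simp only [f14] at h1
    rw [h1, div_mul_eq_mul_div]
  · have := sub_eq_zero.2 hFμ
    simpa only [hF, sub_eq_zero] using hFμ
  · rintro ⟨μ', z'⟩ ⟨hμ', hz', heq, hsum'⟩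
    simp only at hμ' hz' heq hsum'
    have hz'eq : ∀ i, z' i = finv14 (μ'*c/lam i) := by
      intro i
      apply finv14_eq (harg hμ' i) (hz' i)
      simp only [f14]
      rw [heq i, div_mul_eq_mul_div]
    have hFμ' : F μ' = 0 := by
      simp only [hF, sub_eq_zero]
      have hcg : ∀ i ∈ Finset.univ, lam i * γ i / (1 + finv14 (μ'*c/lam i)) = lam i * γ i / (1 + z' i) :=
        fun i _ => by rw [hz'eq i]
      rw [Finset.sum_congr rfl hcg, hsum']
    have hμeq : μ' = μ := hanti.injOn (Set.mem_Ioi.2 hμ') (Set.mem_Ioi.2 hμ) (by rw [hFμ', hFμ])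
    refine Prod.ext hμeq (funext fun i => ?_)
    simp only
    rw [hz'eq i, hμeq]
end

section
/- Suppose τ* ∈ D maximizes the minimum throughput over D, i.e., min_{1≤i≤K} R_i(τ*) ≥ min_{1≤i≤K} R_i(τ) for all τ ∈ D. Then all the user throughputs are equal, R_1(τ*) = R_2(τ*) = ... = R_K(τ*), and the total time constraint is tight: Σ_{j=0}^K τ_j* = 1. -/
open Real

/-- `t ↦ t log₂(1 + c/t)` is positive for `c, t > 0`. -/
lemma aux_pos {c t : ℝ} (hc : 0 < c) (ht : 0 < t) : 0 < t * Real.logb 2 (1 + c / t) :=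
  mul_pos ht (Real.logb_pos one_lt_two (by have := div_pos hc ht; linarith))

/-- `t ↦ t log₂(1 + c/t)` is strictly increasing for `c > 0`. -/
lemma aux_mono {c t1 t2 : ℝ} (hc : 0 < c) (h1 : 0 < t1) (h12 : t1 < t2) :
    t1 * Real.logb 2 (1 + c / t1) < t2 * Real.logb 2 (1 + c / t2) := by
  have h2 : 0 < t2 := h1.trans h12
  have hx1 : (0:ℝ) < c / t2 := div_pos hc h2
  have hy1 : (0:ℝ) < c / t1 := div_pos hc h1
  have hxy : c / t2 < c / t1 := div_lt_div_of_pos_left hc h1 h12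
  have key := strictConcaveOn_log_Ioi.secant_strict_mono (a := 1)
      (x := 1 + c / t2) (y := 1 + c / t1)
      (by simp) (by simp [Set.mem_Ioi]; linarith) (by simp [Set.mem_Ioi]; linarith)
      (by linarith) (by linarith) (by linarith)
  rw [Real.log_one, sub_zero, sub_zero, add_sub_cancel_left, add_sub_cancel_left] at key
  rw [div_lt_div_iff₀ hy1 hx1] at key
  have hmain : t1 * Real.log (1 + c / t1) < t2 * Real.log (1 + c / t2) := by
    have hmul := mul_lt_mul_of_pos_right key (show (0:ℝ) < t1 * t2 / c by positivity)
    have e1 : Real.log (1 + c / t1) * (c / t2) * (t1 * t2 / c) =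
        t1 * Real.log (1 + c / t1) := by field_simp
    have e2 : Real.log (1 + c / t2) * (c / t1) * (t1 * t2 / c) =
        t2 * Real.log (1 + c / t2) := by field_simp
    linarith
  have hlog2 : 0 < Real.log 2 := Real.log_pos one_lt_two
  simp only [Real.logb, ← mul_div_assoc]
  exact div_lt_div_of_pos_right hmain hlog2

/-- perturbation bound: decreasing `t` to `s` loses at most `(t-s) log₂(1+c/s)`. -/
lemma aux_perturb {c s t : ℝ} (hc : 0 < c) (hs : 0 < s) (hst : s < t) :
    t * Real.logb 2 (1 + c / t) ≤
      s * Real.logb 2 (1 + c / s) + (t - s) * Real.logb 2 (1 + c / s) := by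
  have ht : 0 < t := hs.trans hst
  have hdiv : c / t ≤ c / s := div_le_div_of_nonneg_left hc.le hs hst.le
  have hL : Real.logb 2 (1 + c / t) ≤ Real.logb 2 (1 + c / s) :=
    Real.logb_le_logb_of_le one_lt_two (by positivity) (by linarith)
  nlinarith [mul_le_mul_of_nonneg_left hL ht.le]

/-- the infimum of finitely many reals is attained. -/
lemma aux_min {K : ℕ} [Nonempty (Fin K)] (f : Fin K → ℝ) :
    ∃ i, (⨅ j, f j) = f i ∧ ∀ j, f i ≤ f j := by
  obtain ⟨i, hi⟩ := Finite.exists_min f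
  exact ⟨i, le_antisymm (ciInf_le (Finite.bddBelow_range f) i) (le_ciInf hi), hi⟩

/-- If `τ* ∈ D` maximizes the minimum user throughput over `D`, then all user
throughputs at `τ*` are equal and the total time constraint is tight. -/
theorem stmt15 (K : ℕ) (hK : 1 ≤ K) (γ : Fin K → ℝ) (hγ : ∀ i, 0 < γ i)
    (τs : Fin (K + 1) → ℝ) (hτs : τs ∈ Dfeas K)
    (hmax : ∀ τ ∈ Dfeas K, (⨅ i : Fin K, Rthru γ i τ) ≤ ⨅ i : Fin K, Rthru γ i τs) :
    (∀ i j : Fin K, Rthru γ i τs = Rthru γ j τs) ∧ ∑ j, τs j = 1 := by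
  haveI : Nonempty (Fin K) := ⟨⟨0, hK⟩⟩
  obtain ⟨hnn, hsum⟩ := hτs
  set m := ⨅ i, Rthru γ i τs with hm_def
  have hbdd : BddBelow (Set.range fun i => Rthru γ i τs) := Finite.bddBelow_range _
  have hm_le : ∀ i, m ≤ Rthru γ i τs := fun i => ciInf_le hbdd i
  -- positivity of the optimal value
  have hKpos : (0:ℝ) < (K:ℝ) + 1 := by positivity
  have hτu : (fun _ : Fin (K+1) => (1:ℝ)/((K:ℝ)+1)) ∈ Dfeas K := by
    constructor
    · intro j; positivity
    · rw [Finset.sum_const, Finset.card_univ, Fintype.card_fin, nsmul_eq_mul]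
      push_cast
      rw [mul_one_div, div_self hKpos.ne']
  have hmpos : 0 < m := by
    obtain ⟨i0, heq, _⟩ := aux_min (fun i => Rthru γ i (fun _ => (1:ℝ)/((K:ℝ)+1)))
    have hpos : 0 < Rthru γ i0 (fun _ : Fin (K+1) => (1:ℝ)/((K:ℝ)+1)) := by
      rw [Rthru, if_pos (show (0:ℝ) < 1/((K:ℝ)+1) by positivity)]
      exact aux_pos (mul_pos (hγ i0) (by positivity)) (by positivity)
    have := hmax _ hτu
    rw [heq] at this
    linarith
  -- positivity of the components of τs
  have h0pos : 0 < τs 0 := by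
    rcases (hnn 0).lt_or_eq with h | h
    · exact h
    · exfalso
      set i0 : Fin K := ⟨0, hK⟩
      have hz : Rthru γ i0 τs = 0 := by
        rw [Rthru]
        split
        · rw [← h]; simp
        · rfl
      have := hm_le i0
      rw [hz] at this
      linarith
  have hipos : ∀ i : Fin K, 0 < τs i.succ := by
    intro i
    by_contra h
    have hz : Rthru γ i τs = 0 := by rw [Rthru, if_neg h]
    have := hm_le i
    rw [hz] at this
    linarith
  -- total time constraint is tight
  have hS0 : 0 < ∑ j, τs j :=
    lt_of_lt_of_le h0pos (Finset.single_le_sum (fun j _ => hnn j) (Finset.mem_univ 0))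
  have hsum1 : ∑ j, τs j = 1 := by
    by_contra hne1
    have hS : ∑ j, τs j < 1 := lt_of_le_of_ne hsum hne1
    set S := ∑ j, τs j with hS_def
    have hτ'feas : (fun j => τs j / S) ∈ Dfeas K := by
      constructor
      · intro j; exact div_nonneg (hnn j) hS0.le
      · rw [← Finset.sum_div, ← hS_def, div_self hS0.ne']
    have hR' : ∀ i : Fin K, Rthru γ i (fun j => τs j / S) = Rthru γ i τs / S := by
      intro i
      have hi' : 0 < τs i.succ / S := div_pos (hipos i) hS0
      rw [Rthru, Rthru, if_pos hi', if_pos (hipos i)]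
      have harg : γ i * (τs 0 / S) / (τs i.succ / S) = γ i * τs 0 / τs i.succ := by
        field_simp
      simp only [harg]
      ring
    have h1 : m / S ≤ ⨅ i, Rthru γ i (fun j => τs j / S) := by
      apply le_ciInf
      intro i
      rw [hR' i]
      exact div_le_div_of_nonneg_right (hm_le i) hS0.le
    have h2 := hmax _ hτ'feas
    have h3 : m < m / S := by
      rw [lt_div_iff₀ hS0]
      nlinarith
    linarith
  refine ⟨?_, hsum1⟩
  by_contra hne
  push_neg at hne
  obtain ⟨a, b, hab⟩ := hne
  -- there is a user with throughput strictly above the minimum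
  have hex : ∃ i1 : Fin K, m < Rthru γ i1 τs := by
    rcases (hm_le a).lt_or_eq with h | h
    · exact ⟨a, h⟩
    · rcases (hm_le b).lt_or_eq with h' | h'
      · exact ⟨b, h'⟩
      · exact absurd (by rw [← h, ← h']) hab
  obtain ⟨i1, hi1⟩ := hex
  have htpos : 0 < τs i1.succ := hipos i1
  have hcpos : 0 < γ i1 * τs 0 := mul_pos (hγ i1) h0pos
  set B := Real.logb 2 (1 + 2 * (γ i1 * τs 0) / τs i1.succ) with hB_def
  have hBpos : 0 < B := Real.logb_pos one_lt_two
    (by have : 0 < 2 * (γ i1 * τs 0) / τs i1.succ := by positivity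
        linarith)
  set ε := min (τs i1.succ / 2) ((Rthru γ i1 τs - m) / (2 * B)) with hε_def
  have hεpos : 0 < ε :=
    lt_min (by positivity) (div_pos (by linarith) (by positivity))
  have hεt : ε ≤ τs i1.succ / 2 := min_le_left _ _
  have hεB : ε * B ≤ (Rthru γ i1 τs - m) / 2 := by
    have h1 := min_le_right (τs i1.succ / 2) ((Rthru γ i1 τs - m) / (2 * B))
    calc ε * B ≤ (Rthru γ i1 τs - m) / (2 * B) * B :=
          mul_le_mul_of_nonneg_right h1 hBpos.le
      _ = (Rthru γ i1 τs - m) / 2 := by field_simp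
  have hK0 : (0:ℝ) < (K:ℝ) := by exact_mod_cast hK
  set δ := ε / (K:ℝ) with hδ_def
  have hδpos : 0 < δ := div_pos hεpos hK0
  set τ' : Fin (K+1) → ℝ :=
    fun j => τs j + (if j = i1.succ then -ε else if j = 0 then 0 else δ) with hτ'_def
  have hτ'0 : τ' 0 = τs 0 := by
    simp [hτ'_def, (Fin.succ_ne_zero i1).symm]
  have hτ'succ1 : τ' i1.succ = τs i1.succ - ε := by
    simp [hτ'_def, sub_eq_add_neg]
  have hτ'succ : ∀ j : Fin K, j ≠ i1 → τ' j.succ = τs j.succ + δ := by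
    intro j hj
    simp only [hτ'_def]
    rw [if_neg (fun h => hj (Fin.succ_injective _ h)), if_neg (Fin.succ_ne_zero j)]
  have hts : 0 < τs i1.succ - ε := by linarith
  have hτ'feas : τ' ∈ Dfeas K := by
    constructor
    · intro j
      simp only [hτ'_def]
      by_cases h1 : j = i1.succ
      · rw [if_pos h1, h1]; linarith
      · rw [if_neg h1]
        by_cases h2 : j = 0
        · rw [if_pos h2]; linarith [hnn j]
        · rw [if_neg h2]; linarith [hnn j]
    · have hle : ∀ j : Fin (K+1),
          τ' j ≤ τs j + (if j = i1.succ then -ε else δ) := by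
        intro j
        simp only [hτ'_def]
        by_cases h1 : j = i1.succ
        · rw [if_pos h1, if_pos h1]
        · rw [if_neg h1, if_neg h1]
          by_cases h2 : j = 0
          · rw [if_pos h2]; linarith
          · rw [if_neg h2]
      have hrw : ∀ j : Fin (K+1),
          (if j = i1.succ then -ε else δ) = (if j = i1.succ then -ε - δ else 0) + δ := by
        intro j
        by_cases h : j = i1.succ <;> simp [h]
      have hsum' : ∑ j : Fin (K+1), (if j = i1.succ then -ε else δ)
          = (K:ℝ) * δ - ε := by
        rw [Finset.sum_congr rfl (fun j _ => hrw j), Finset.sum_add_distrib,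
          Finset.sum_ite_eq' Finset.univ i1.succ (fun _ => -ε - δ),
          if_pos (Finset.mem_univ _), Finset.sum_const, Finset.card_univ,
          Fintype.card_fin, nsmul_eq_mul]
        push_cast
        ring
      have hKδ : (K:ℝ) * δ = ε := by
        rw [hδ_def, mul_div_cancel₀ _ hK0.ne']
      calc ∑ j, τ' j ≤ ∑ j : Fin (K+1), (τs j + (if j = i1.succ then -ε else δ)) :=
            Finset.sum_le_sum (fun j _ => hle j)
        _ = ∑ j, τs j + ((K:ℝ) * δ - ε) := by rw [Finset.sum_add_distrib, hsum']
        _ ≤ 1 := by rw [hKδ]; simp [hsum1]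
  have hlow : ∀ j : Fin K, m < Rthru γ j τ' := by
    intro j
    by_cases hj : j = i1
    · subst hj
      have hR' : Rthru γ j τ'
          = (τs j.succ - ε) * Real.logb 2 (1 + γ j * τs 0 / (τs j.succ - ε)) := by
        rw [Rthru, hτ'succ1, hτ'0, if_pos hts]
      have hperturb := aux_perturb (c := γ j * τs 0) hcpos hts
        (show τs j.succ - ε < τs j.succ by linarith)
      rw [sub_sub_cancel] at hperturb
      have hRs : Rthru γ j τs
          = τs j.succ * Real.logb 2 (1 + γ j * τs 0 / τs j.succ) := by
        rw [Rthru, if_pos htpos]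
      have hLbound : Real.logb 2 (1 + γ j * τs 0 / (τs j.succ - ε)) ≤ B := by
        rw [hB_def]
        apply Real.logb_le_logb_of_le one_lt_two (by positivity)
        have harg : γ j * τs 0 / (τs j.succ - ε) ≤ 2 * (γ j * τs 0) / τs j.succ := by
          rw [div_le_div_iff₀ hts htpos]
          nlinarith [mul_nonneg hcpos.le (show 0 ≤ τs j.succ - 2 * ε by linarith)]
        linarith
      have hεL : ε * Real.logb 2 (1 + γ j * τs 0 / (τs j.succ - ε)) ≤ ε * B :=
        mul_le_mul_of_nonneg_left hLbound hεpos.le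
      rw [hR']
      rw [hRs] at hi1 hεB
      linarith
    · have h0' : 0 < τ' j.succ := by
        rw [hτ'succ j hj]; linarith [hipos j]
      have hlt : Rthru γ j τs < Rthru γ j τ' := by
        rw [Rthru, Rthru, if_pos (hipos j), if_pos h0', hτ'succ j hj, hτ'0]
        exact aux_mono (mul_pos (hγ j) h0pos) (hipos j) (by linarith [hipos j])
      linarith [hm_le j]
  obtain ⟨jm, hjeq, _⟩ := aux_min (fun j => Rthru γ j τ')
  have hfin := hmax τ' hτ'feas
  rw [hjeq] at hfin
  exact absurd hfin (not_le.mpr (hlow jm))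
end
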